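/- Let p ∈ Γ* and m ∈ ℕ⁺, and let f^p_m := {q ∈ Γ* : p is not a subsequence of q and |q| ≤ m}. Then: (1) the duplicator has a winning strategy in the game G_{𝓕(f^p_m)}(Ã^p_m, B̃^p_m); and (2) for every first-order sentence ψ over τ⁺ with W(qs(ψ)) ⊆ f^p_m, if Ã^p_m ⊨ ψ then B̃^p_m ⊨ ψ. -/

import Mathlib

namespace QSH

open FirstOrder Language

/-! ### Γ-labelled forests -/

/-- The two quantifier labels `∃` and `∀` (the set Γ). -/
inductive Quant : Type where
  | ex : Quant
  | fa : Quant
deriving DecidableEq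

instance instFintypeQuant : Fintype Quant :=
  ⟨{Quant.ex, Quant.fa}, fun x => by cases x <;> simp⟩

instance : Inhabited Quant := ⟨.ex⟩

/-- A Γ-labelled directed graph: a type of nodes, an arc relation
(directed from parent to child) and a labelling of nodes by `∃`/`∀`.
Γ-labelled forests and quantifier structures of formulas are such graphs. -/
structure QGraph : Type 1 where
  V : Type
  arc : V → V → Prop
  lab : V → Quant

/-- `S₁ ⪯ₑ S₂`: there is a (not necessarily injective) label-preserving map `ι`
from the nodes of `S₁` to the nodes of `S₂` such that whenever `S₁` has an arc
from `x` to `y`, `S₂` has a nontrivial directed path from `ι x` to `ι y`. -/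
def QGraph.Embeds (S₁ S₂ : QGraph) : Prop :=
  ∃ ι : S₁.V → S₂.V,
    (∀ v, S₂.lab (ι v) = S₁.lab v) ∧
    ∀ x y, S₁.arc x y → Relation.TransGen S₂.arc (ι x) (ι y)

/-- `W(S)`: the set of words in Γ* that are subsequences of the label-words
read along directed paths of `S`. -/
def QGraph.Words (S : QGraph) : Set (List Quant) :=
  { w | ∃ l : List S.V, l.Chain' S.arc ∧ w.Sublist (l.map S.lab) }

/-- Isomorphism of Γ-labelled graphs ("having the same quantifier structure"). -/
def QGraph.Iso (G H : QGraph) : Prop :=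
  ∃ e : G.V ≃ H.V, (∀ v, H.lab (e v) = G.lab v) ∧ ∀ x y, G.arc x y ↔ H.arc (e x) (e y)

/-- A root: a node with no incoming arc. -/
def QGraph.isRoot (S : QGraph) (v : S.V) : Prop := ∀ w, ¬ S.arc w v

/-- The empty Γ-labelled graph. -/
def QGraph.empty : QGraph :=
  ⟨Empty, fun _ _ => False, fun x => x.elim⟩

/-- Disjoint union of two Γ-labelled graphs. -/
def QGraph.union (G H : QGraph) : QGraph where
  V := G.V ⊕ H.V
  arc := Sum.LiftRel G.arc H.arc
  lab := Sum.elim G.lab H.lab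

/-- Add a new root labelled `q`, with an arc to each root of `G`. -/
def QGraph.addRoot (q : Quant) (G : QGraph) : QGraph where
  V := Option G.V
  arc x y :=
    match x, y with
    | some a, some b => G.arc a b
    | none, some b => G.isRoot b
    | _, none => False
  lab x := x.elim q G.lab

/-- A finite Γ-labelled forest: a finite Γ-labelled digraph in which every node
has at most one parent and which has no directed cycles, i.e. a finite disjoint
union of rooted trees with arcs directed from parent to child. -/
structure LForest : Type 1 extends QGraph where
  finV : Finite V
  parent_unique : ∀ ⦃x y z : V⦄, arc x z → arc y z → x = y
  acyclic : ∀ x : V, ¬ Relation.TransGen arc x x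

/-! ### First-order formulas in negation normal form, their semantics, and
their quantifier structures -/

universe u v w

/-- Realization of a term, with the structure as explicit data. -/
def TermRealize {L : FirstOrder.Language.{u, v}} {M : Type w} (str : L.Structure M) {α : Type*}
    (vmap : α → M) : L.Term α → M
  | .var a => vmap a
  | .func f ts => str.funMap f fun i => TermRealize str vmap (ts i)

/-- First-order formulas in negation normal form with free variables among `Fin n`. -/
inductive NNF (L : FirstOrder.Language.{u, v}) : ℕ → Type (max u v) where
  | verum {n : ℕ} : NNF L n
  | falsum {n : ℕ} : NNF L n
  | eq {n : ℕ} (t₁ t₂ : L.Term (Fin n)) : NNF L n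
  | ne {n : ℕ} (t₁ t₂ : L.Term (Fin n)) : NNF L n
  | rel {n m : ℕ} (R : L.Relations m) (ts : Fin m → L.Term (Fin n)) : NNF L n
  | nrel {n m : ℕ} (R : L.Relations m) (ts : Fin m → L.Term (Fin n)) : NNF L n
  | conj {n : ℕ} (φ ψ : NNF L n) : NNF L n
  | disj {n : ℕ} (φ ψ : NNF L n) : NNF L n
  | ex {n : ℕ} (φ : NNF L (n + 1)) : NNF L n
  | fa {n : ℕ} (φ : NNF L (n + 1)) : NNF L n

/-- Tarskian satisfaction for `NNF` formulas. -/
def NNF.Realize {L : FirstOrder.Language.{u, v}} {M : Type w} (str : L.Structure M) :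
    ∀ {n : ℕ}, NNF L n → (Fin n → M) → Prop
  | _, .verum, _ => True
  | _, .falsum, _ => False
  | _, .eq t₁ t₂, vv => TermRealize str vv t₁ = TermRealize str vv t₂
  | _, .ne t₁ t₂, vv => TermRealize str vv t₁ ≠ TermRealize str vv t₂
  | _, .rel R ts, vv => str.RelMap R fun i => TermRealize str vv (ts i)
  | _, .nrel R ts, vv => ¬ str.RelMap R fun i => TermRealize str vv (ts i)
  | _, .conj φ ψ, vv => φ.Realize str vv ∧ ψ.Realize str vv
  | _, .disj φ ψ, vv => φ.Realize str vv ∨ ψ.Realize str vv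
  | _, .ex φ, vv => ∃ x : M, φ.Realize str (Fin.snoc vv x)
  | _, .fa φ, vv => ∀ x : M, φ.Realize str (Fin.snoc vv x)

/-- The quantifier structure `qs φ` of an NNF formula: empty for literals,
disjoint union for conjunction/disjunction, and a new labelled root
above `qs` of the body for quantifiers. -/
def NNF.qs {L : FirstOrder.Language.{u, v}} : ∀ {n : ℕ}, NNF L n → QGraph
  | _, .verum => QGraph.empty
  | _, .falsum => QGraph.empty
  | _, .eq _ _ => QGraph.empty
  | _, .ne _ _ => QGraph.empty
  | _, .rel _ _ => QGraph.empty
  | _, .nrel _ _ => QGraph.empty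
  | _, .conj φ ψ => φ.qs.union ψ.qs
  | _, .disj φ ψ => φ.qs.union ψ.qs
  | _, .ex φ => φ.qs.addRoot .ex
  | _, .fa φ => φ.qs.addRoot .fa

/-- Renaming of free variables. -/
def NNF.relabel {L : FirstOrder.Language.{u, v}} : ∀ {n k : ℕ}, NNF L n → (Fin n → Fin k) → NNF L k
  | _, _, .verum, _ => .verum
  | _, _, .falsum, _ => .falsum
  | _, _, .eq t₁ t₂, f => .eq (t₁.relabel f) (t₂.relabel f)
  | _, _, .ne t₁ t₂, f => .ne (t₁.relabel f) (t₂.relabel f)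
  | _, _, .rel R ts, f => .rel R fun i => (ts i).relabel f
  | _, _, .nrel R ts, f => .nrel R fun i => (ts i).relabel f
  | _, _, .conj φ ψ, f => .conj (φ.relabel f) (ψ.relabel f)
  | _, _, .disj φ ψ, f => .disj (φ.relabel f) (ψ.relabel f)
  | _, _, .ex φ, f => .ex (φ.relabel (Fin.snoc (fun i => (f i).castSucc) (Fin.last _)))
  | _, _, .fa φ, f => .fa (φ.relabel (Fin.snoc (fun i => (f i).castSucc) (Fin.last _)))

/-- Substitution of terms for free variables. -/
def NNF.subst {L : FirstOrder.Language.{u, v}} :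
    ∀ {n k : ℕ}, NNF L n → (Fin n → L.Term (Fin k)) → NNF L k
  | _, _, .verum, _ => .verum
  | _, _, .falsum, _ => .falsum
  | _, _, .eq t₁ t₂, f => .eq (t₁.subst f) (t₂.subst f)
  | _, _, .ne t₁ t₂, f => .ne (t₁.subst f) (t₂.subst f)
  | _, _, .rel R ts, f => .rel R fun i => (ts i).subst f
  | _, _, .nrel R ts, f => .nrel R fun i => (ts i).subst f
  | _, _, .conj φ ψ, f => .conj (φ.subst f) (ψ.subst f)
  | _, _, .disj φ ψ, f => .disj (φ.subst f) (ψ.subst f)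
  | _, _, .ex φ, f =>
      .ex (φ.subst (Fin.snoc (fun i => (f i).relabel Fin.castSucc) (Term.var (Fin.last _))))
  | _, _, .fa φ, f =>
      .fa (φ.subst (Fin.snoc (fun i => (f i).relabel Fin.castSucc) (Term.var (Fin.last _))))

/-! ### Concrete signatures -/

/-- The relation symbols of the signature `τ = ⟨E⟩` of digraphs. -/
inductive TauRel : ℕ → Type where
  | E : TauRel 2

/-- The signature `τ = ⟨E⟩` of digraphs: one binary relation symbol. -/
def tau : FirstOrder.Language := ⟨fun _ => Empty, TauRel⟩

/-- The function symbols of `τ⁺`: the single constant `r`. -/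
inductive TauPlusFun : ℕ → Type where
  | r : TauPlusFun 0

/-- The relation symbols of `τ⁺`: `U` unary, `R`, `B` binary. -/
inductive TauPlusRel : ℕ → Type where
  | U : TauPlusRel 1
  | R : TauPlusRel 2
  | B : TauPlusRel 2

/-- The signature `τ⁺ = ⟨U, R, B, r⟩`. -/
def tauPlus : FirstOrder.Language := ⟨TauPlusFun, TauPlusRel⟩

/-- The relation symbols of `τ⁺ᴼᴿᴰ`: those of `τ⁺` together with `≤`. -/
inductive TauPlusOrdRel : ℕ → Type where
  | U : TauPlusOrdRel 1
  | R : TauPlusOrdRel 2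
  | B : TauPlusOrdRel 2
  | le : TauPlusOrdRel 2

/-- The signature `τ⁺ᴼᴿᴰ = ⟨U, R, B, r, ≤⟩`. -/
def tauPlusOrd : FirstOrder.Language := ⟨TauPlusFun, TauPlusOrdRel⟩

/-- The relation symbols of `⟨E, ≤⟩`. -/
inductive TauOrdRel : ℕ → Type where
  | E : TauOrdRel 2
  | le : TauOrdRel 2

/-- The signature `⟨E, ≤⟩` of ordered digraphs. -/
def tauOrd : FirstOrder.Language := ⟨fun _ => Empty, TauOrdRel⟩

/-- A bundled finite `L`-structure. -/
structure FinStr (L : FirstOrder.Language.{u, v}) where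
  carrier : Type
  fin : Finite carrier
  str : L.Structure carrier

/-- Satisfaction of an NNF sentence in a bundled finite structure. -/
def FinStr.Sat {L : FirstOrder.Language.{u, v}} (M : FinStr L) (φ : NNF L 0) : Prop :=
  φ.Realize M.str fun i => i.elim0

/-- `r` is a linear order (transitive, antisymmetric and total). -/
def IsLinearOrderRel {M : Type*} (r : M → M → Prop) : Prop :=
  (∀ x y z, r x y → r y z → r x z) ∧ (∀ x y, r x y → r y x → x = y) ∧ (∀ x y, r x y ∨ r y x)

/-! ### The Ehrenfeucht–Fraïssé style game `G_S(𝔄, 𝔅)` -/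

/-- `(as, bs)` defines a partial isomorphism between `A` and `B`: the map sending
the interpretations of the constants (more generally, of all closed terms in the
picked elements) of `A` to those of `B` preserves equalities and all relations. -/
def PIso {L : FirstOrder.Language.{u, v}} {A : Type*} {B : Type*} (sA : L.Structure A)
    (sB : L.Structure B) {t : ℕ} (as : Fin t → A) (bs : Fin t → B) : Prop :=
  (∀ t₁ t₂ : L.Term (Fin t),
      TermRealize sA as t₁ = TermRealize sA as t₂ ↔
        TermRealize sB bs t₁ = TermRealize sB bs t₂) ∧
  (∀ (m : ℕ) (R : L.Relations m) (ts : Fin m → L.Term (Fin t)),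
      (sA.RelMap R fun i => TermRealize sA as (ts i)) ↔
        (sB.RelMap R fun i => TermRealize sB bs (ts i)))

/-- The history of a play (the pairs of elements picked so far, in order)
defines a partial isomorphism. -/
def HistOK {L : FirstOrder.Language.{u, v}} {A B : Type*} (sA : L.Structure A) (sB : L.Structure B)
    (h : List (A × B)) : Prop :=
  PIso sA sB (fun i : Fin h.length => (h.get i).1) (fun i : Fin h.length => (h.get i).2)

/-- The duplicator can survive (at least) `k` more rounds of the game, the token
being on node `v` and `h` being the history of picked pairs: in the round at `v`,
if `v` is labelled `∃` the spoiler picks in `A` and the duplicator answers in `B`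
(dually for `∀`); the extended history must still be a partial isomorphism, and
she must survive whichever child of `v` the spoiler moves the token to. -/
def DWinN {L : FirstOrder.Language.{u, v}} {A B : Type*} (S : QGraph) (sA : L.Structure A)
    (sB : L.Structure B) : ℕ → S.V → List (A × B) → Prop
  | 0, _, _ => True
  | k + 1, v, h =>
    match S.lab v with
    | .ex => ∀ a : A, ∃ b : B, HistOK sA sB (h ++ [(a, b)]) ∧
        ∀ w : S.V, S.arc v w → DWinN S sA sB k w (h ++ [(a, b)])
    | .fa => ∀ b : B, ∃ a : A, HistOK sA sB (h ++ [(a, b)]) ∧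
        ∀ w : S.V, S.arc v w → DWinN S sA sB k w (h ++ [(a, b)])

/-- The duplicator has a winning strategy in the game `G_S(𝔄, 𝔅)` played with the
initial history `h` (the empty history corresponds to the plain game): the initial
position must be a partial isomorphism, and whichever tree of the forest `S` the
spoiler picks, she can survive the play down that tree.  (Since `S` is a finite
forest, every play lasts at most `Nat.card S.V` rounds, so the fuel
`Nat.card S.V + 1` never runs out.) -/
def DupWinsFrom {L : FirstOrder.Language.{u, v}} {A B : Type*} (S : LForest) (sA : L.Structure A)
    (sB : L.Structure B) (h : List (A × B)) : Prop :=
  HistOK sA sB h ∧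
  ∀ v : S.V, S.toQGraph.isRoot v → DWinN S.toQGraph sA sB (Nat.card S.V + 1) v h

/-- The duplicator has a winning strategy in the game `G_S(𝔄, 𝔅)`. -/
def DupWins {L : FirstOrder.Language.{u, v}} {A B : Type*} (S : LForest) (sA : L.Structure A)
    (sB : L.Structure B) : Prop :=
  DupWinsFrom S sA sB []

end QSH
namespace QSH

open FirstOrder Language

/-! ### The forest `𝓕(P)` of a set of prefixes: the prefix tree (trie) of `P` -/

private lemma transGen_nat_lt {α : Type*} {r : α → α → Prop} (f : α → ℕ)
    (h : ∀ x y, r x y → f x < f y) {x y : α} (hxy : Relation.TransGen r x y) :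
    f x < f y := by
  induction hxy with
  | single h' => exact h _ _ h'
  | tail _ h' ih => exact ih.trans (h _ _ h')

/-- The Γ-labelled graph `𝓕(P)` for a set of prefixes `P ⊆ Γ*`: its nodes are the
nonempty initial segments of words of `P`, a node `w` is labelled by its last
letter, and there is an arc from `w` to `w ++ [s]`.  This is the forest obtained
by the recursive definition: `𝓕(∅)` is empty, and writing
`P = (∃ * P₁) ∪ (∀ * P₂)`, `𝓕(P)` is the disjoint union of a tree with an
`∃`-labelled root with an arc to each root of `𝓕(P₁)` and a tree with a
`∀`-labelled root with an arc to each root of `𝓕(P₂)` (omitting a tree when the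
corresponding part of `P` is empty). -/
abbrev trieGraph (P : Set (List Quant)) : QGraph where
  V := {w : List Quant // w ≠ [] ∧ ∃ q ∈ P, w <+: q}
  arc x y := ∃ s : Quant, (y : List Quant) = (x : List Quant) ++ [s]
  lab w := (w : List Quant).getLast w.2.1

/-- For finite `P`, the forest `𝓕(P)` as a finite Γ-labelled forest. -/
noncomputable def forestOf (P : Set (List Quant)) (hP : P.Finite) : LForest where
  toQGraph := trieGraph P
  finV := by
    have hfin : {w : List Quant | w ≠ [] ∧ ∃ q ∈ P, w <+: q}.Finite := by
      refine Set.Finite.subset (hP.biUnion fun q _ => q.inits.finite_toSet) ?_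
      rintro w ⟨-, q, hq, hpre⟩
      exact Set.mem_biUnion hq ((List.mem_inits _ _).mpr hpre)
    exact hfin.to_subtype
  parent_unique := by
    rintro x y z ⟨s, hs⟩ ⟨s', hs'⟩
    apply Subtype.ext
    have h2 : (x : List Quant) ++ [s] = (y : List Quant) ++ [s'] := by rw [← hs, ← hs']
    exact (List.append_inj' h2 rfl).1
  acyclic := by
    intro x hx
    have key : ∀ a b, (trieGraph P).arc a b →
        (a : List Quant).length < (b : List Quant).length := by
      rintro a b ⟨s, hs⟩
      simp [hs]
    exact absurd (transGen_nat_lt _ key hx) (lt_irrefl _)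

/-- A prefix `p ∈ Γ*`, viewed as a Γ-labelled degenerate tree (a directed path
whose `i`-th node is labelled `p[i]`). -/
noncomputable def pathForest (p : List Quant) : LForest :=
  forestOf {p} (Set.finite_singleton p)

/-- `f^p_m`: the set of prefixes of length at most `m` in which `p` does not embed
(i.e. of which `p` is not a subsequence). -/
def fpm (p : List Quant) (m : ℕ) : Set (List Quant) :=
  {q | ¬ p.Sublist q ∧ q.length ≤ m}

lemma fpm_finite (p : List Quant) (m : ℕ) : (fpm p m).Finite := by
  refine Set.Finite.subset (List.finite_length_le Quant m) ?_
  rintro q ⟨-, hq⟩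
  exact hq

end QSH
namespace QSH

open FirstOrder Language

/-! ### The edge-coloured trees `Ã^p_m` and `B̃^p_m` -/

/-- A finite tree with `Bool`-coloured nodes (`true` = black) and
`Bool`-coloured edges to the children (`true` = red, `false` = blue). -/
inductive CT : Type where
  | node : Bool → List (Bool × CT) → CT

/-- Is the root of this tree black? -/
def CT.isBlack : CT → Bool
  | .node b _ => b

/-- The children of the root, together with the colours of the edges to them. -/
def CT.children : CT → List (Bool × CT)
  | .node _ cs => cs

/-- The subtree at a given address (a list of child indices), if it exists. -/
def CT.sub : List ℕ → CT → Option CT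
  | [], t => some t
  | i :: rest, t =>
    match t.children[i]? with
    | some p => CT.sub rest p.2
    | none => none

/-- The nodes of the tree `t`: the valid addresses. -/
abbrev CT.Node (t : CT) : Type := {addr : List ℕ // (CT.sub addr t).isSome = true}

/-- The root of the tree. -/
def CT.rootNode (t : CT) : t.Node := ⟨[], rfl⟩

/-- There is an edge of colour `col` from the node at address `x` to the node at
address `y` (so `y` is a child of `x`). -/
def CT.edgeC (t : CT) (col : Bool) (x y : List ℕ) : Prop :=
  ∃ (i : ℕ) (s : CT) (p : Bool × CT),
    CT.sub x t = some s ∧ s.children[i]? = some p ∧ p.1 = col ∧ y = x ++ [i]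

/-- The node at address `x` is black. -/
def CT.blackAt (t : CT) (x : List ℕ) : Prop :=
  ∃ s, CT.sub x t = some s ∧ s.isBlack = true

/-- The node at address `x` is a leaf. -/
def CT.leafAt (t : CT) (x : List ℕ) : Prop :=
  ∃ s, CT.sub x t = some s ∧ s.children = []

/-- Exchange the colours of all edges (red ↔ blue): `Ã^{-p}_m` from `Ã^p_m`. -/
def CT.swap : CT → CT
  | .node b cs => .node b (cs.attach.map fun p => (!p.1.1, CT.swap p.1.2))
decreasing_by
  obtain ⟨⟨c, t⟩, hm⟩ := p
  have h := List.sizeOf_lt_of_mem hm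
  simp only [Prod.mk.sizeOf_spec, CT.node.sizeOf_spec] at h ⊢
  omega

/-- Join two trees at their roots (the shared root, the "junction point"). -/
def CT.joinRoots : CT → CT → CT
  | .node b cs, .node _ ds => .node b (cs ++ ds)

/-- A depth-1 tree whose edges are all red, with `kb` black leaves and
`kw` non-black leaves. -/
def starT (kb kw : ℕ) : CT :=
  .node false
    (List.replicate kb (true, CT.node true []) ++ List.replicate kw (true, CT.node false []))

/-- The pair `(Ã^p_m, B̃^p_m)` for the prefix `p = s :: q`, built by recursion:
* `Ã^∃_m` is a depth-1 all-red tree with `2m+1` leaves, exactly one black, and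
  `B̃^∃_m` has `2m` leaves, none black;
* `Ã^∀_m` has `2m` leaves, all black, and `B̃^∀_m` has `2m+1` leaves, all black
  except one;
* for `p = ∃q`, with `D^{X,Y}_{q,m}` the join at the roots of a copy of `X̃^q_m`
  and a copy of `Ỹ^{-q}_m`, `Ã^{∃q}_m` has a root joined by red edges to the
  junction points of one copy of `D^{A,A}`, `m` copies of `D^{A,B}` and `m`
  copies of `D^{B,A}`, while `B̃^{∃q}_m` omits the copy of `D^{A,A}`;
* `Ã^{∀q}_m` is defined as `B̃^{∃q}_m`, and `B̃^{∀q}_m` as `Ã^{∃q}_m` with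
  `D^{A,A}` replaced by a copy of `D^{B,B}`. -/
def ABt : Quant → List Quant → ℕ → CT × CT
  | .ex, [], m => (starT 1 (2 * m), starT 0 (2 * m))
  | .fa, [], m => (starT (2 * m) 0, starT (2 * m) 1)
  | .ex, s :: q, m =>
    let P := ABt s q m
    let DAA := P.1.joinRoots P.1.swap
    let DAB := P.1.joinRoots P.2.swap
    let DBA := P.2.joinRoots P.1.swap
    ( .node false ((true, DAA) ::
        (List.replicate m (true, DAB) ++ List.replicate m (true, DBA))),
      .node false (List.replicate m (true, DAB) ++ List.replicate m (true, DBA)) )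
  | .fa, s :: q, m =>
    let P := ABt s q m
    let DAB := P.1.joinRoots P.2.swap
    let DBA := P.2.joinRoots P.1.swap
    let DBB := P.2.joinRoots P.2.swap
    ( .node false (List.replicate m (true, DAB) ++ List.replicate m (true, DBA)),
      .node false ((true, DBB) ::
        (List.replicate m (true, DAB) ++ List.replicate m (true, DBA))) )

/-- The structure `Ã^p_m` (for nonempty `p`). -/
def Atil : List Quant → ℕ → CT
  | [], _ => CT.node false []
  | s :: q, m => (ABt s q m).1

/-- The structure `B̃^p_m` (for nonempty `p`). -/
def Btil : List Quant → ℕ → CT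
  | [], _ => CT.node false []
  | s :: q, m => (ABt s q m).2

/-- The `τ⁺`-interpretation of the constant `r` on the nodes of `t`: the root. -/
def ctFunMap (t : CT) : ∀ {n : ℕ}, TauPlusFun n → (Fin n → t.Node) → t.Node
  | _, .r, _ => t.rootNode

/-- The `τ⁺`-interpretation of `U`, `R`, `B` on the nodes of `t`: `U` holds of
the black nodes, `R` of the red edges and `B` of the blue edges. -/
def ctRelMap (t : CT) : ∀ {n : ℕ}, TauPlusRel n → (Fin n → t.Node) → Prop
  | _, .U, vv => t.blackAt (vv 0).1
  | _, .R, vv => t.edgeC true (vv 0).1 (vv 1).1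
  | _, .B, vv => t.edgeC false (vv 0).1 (vv 1).1

/-- The coloured tree `t` as a `τ⁺`-structure. -/
def CT.Str (t : CT) : tauPlus.Structure t.Node where
  funMap := fun f => ctFunMap t f
  RelMap := fun Rl => ctRelMap t Rl

/-- Satisfaction of a `τ⁺`-sentence in the coloured tree `t`. -/
def CTSat (t : CT) (φ : NNF tauPlus 0) : Prop :=
  φ.Realize t.Str fun i => i.elim0

end QSH
namespace QSH

open FirstOrder Language

/-! ### The `τ⁺`-formulas `ψ̃_p`, `ψ̃_{-p}` and the sentences `φ̃_p`, `φ̃_{-p}` -/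

/-- The pair `(ψ̃_p(y), ψ̃_{-p}(y))` of `τ⁺`-formulas with one free variable `y`:
`ψ̃_ε(x) = ψ̃_{-ε}(x) := U(x)`;
`ψ̃_{∃q}(y) := ∃x (R y x ∧ ψ̃_q(x) ∧ ψ̃_{-q}(x))`;
`ψ̃_{∀q}(y) := ∀x (R y x → ψ̃_q(x) ∨ ψ̃_{-q}(x))`;
and dually with `B` in place of `R` for `ψ̃_{-∃q}`, `ψ̃_{-∀q}`
(written in negation normal form). -/
def psiPair : List Quant → NNF tauPlus 1 × NNF tauPlus 1
  | [] => (.rel TauPlusRel.U ![Term.var 0], .rel TauPlusRel.U ![Term.var 0])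
  | .ex :: q =>
    let P := psiPair q
    let f := P.1.relabel fun _ => (1 : Fin 2)
    let g := P.2.relabel fun _ => (1 : Fin 2)
    ( .ex (.conj (.rel TauPlusRel.R ![Term.var 0, Term.var 1]) (.conj f g)),
      .ex (.conj (.rel TauPlusRel.B ![Term.var 0, Term.var 1]) (.conj f g)) )
  | .fa :: q =>
    let P := psiPair q
    let f := P.1.relabel fun _ => (1 : Fin 2)
    let g := P.2.relabel fun _ => (1 : Fin 2)
    ( .fa (.disj (.nrel TauPlusRel.R ![Term.var 0, Term.var 1]) (.disj f g)),
      .fa (.disj (.nrel TauPlusRel.B ![Term.var 0, Term.var 1]) (.disj f g)) )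

/-- The constant symbol `r` as a closed `τ⁺`-term. -/
def rTerm : tauPlus.Term (Fin 0) := Term.func TauPlusFun.r ![]

/-- The sentence `φ̃_p := ψ̃_p(r)`. -/
def phiTil (p : List Quant) : NNF tauPlus 0 := (psiPair p).1.subst fun _ => rTerm

/-- The sentence `φ̃_{-p} := ψ̃_{-p}(r)`. -/
def phiTilNeg (p : List Quant) : NNF tauPlus 0 := (psiPair p).2.subst fun _ => rTerm

end QSH
namespace QSH

open FirstOrder Language

/-! ### The reduction from `τ⁺` to `τ = ⟨E⟩` -/

/-- The atom `E xᵢ xⱼ` over `τ`. -/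
def Eat {n : ℕ} (i j : Fin n) : NNF tau n := .rel TauRel.E ![Term.var i, Term.var j]

/-- The negated atom `¬ E xᵢ xⱼ` over `τ`. -/
def nEat {n : ℕ} (i j : Fin n) : NNF tau n := .nrel TauRel.E ![Term.var i, Term.var j]

/-- The pair `(ψ'_q(x, y), ψ'_{-q}(x, y))` of `τ`-formulas with two free
variables (variable `0` is `x`, variable `1` is `y`):
`ψ'_ε(x,y) = ψ'_{-ε}(x,y) := Exy ∧ Eyx`;
`ψ'_{∃q}(x,y) := ∃z (Eyz ∧ z ≠ x ∧ ψ'_q(y,z) ∧ ψ'_{-q}(y,z))`;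
`ψ'_{∀q}(x,y) := ∀z (Eyz ∧ z ≠ x → ψ'_q(y,z) ∨ ψ'_{-q}(y,z))`;
and dually with `Ezy` in place of `Eyz` for `ψ'_{-∃q}`, `ψ'_{-∀q}`
(written in negation normal form). -/
def psiRed : List Quant → NNF tau 2 × NNF tau 2
  | [] => (.conj (Eat 0 1) (Eat 1 0), .conj (Eat 0 1) (Eat 1 0))
  | .ex :: q =>
    let P := psiRed q
    let f := P.1.relabel ![1, 2]
    let g := P.2.relabel ![1, 2]
    ( .ex (.conj (Eat 1 2) (.conj (.ne (Term.var 2) (Term.var 0)) (.conj f g))),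
      .ex (.conj (Eat 2 1) (.conj (.ne (Term.var 2) (Term.var 0)) (.conj f g))) )
  | .fa :: q =>
    let P := psiRed q
    let f := P.1.relabel ![1, 2]
    let g := P.2.relabel ![1, 2]
    ( .fa (.disj (nEat 1 2) (.disj (.eq (Term.var 2) (Term.var 0)) (.disj f g))),
      .fa (.disj (nEat 2 1) (.disj (.eq (Term.var 2) (Term.var 0)) (.disj f g))) )

/-- The pair `(ψ'_q(r, y), ψ'_{-q}(r, y))` after the transformation removing the
root: atoms `z ≠ r` are removed and atoms involving the root are replaced by
self-loops.  Variable `0` is `y`. -/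
def chiRed : List Quant → NNF tau 1 × NNF tau 1
  | [] => (.conj (Eat 0 0) (Eat 0 0), .conj (Eat 0 0) (Eat 0 0))
  | .ex :: q =>
    let P := psiRed q
    ( .ex (.conj (Eat 0 1) (.conj P.1 P.2)),
      .ex (.conj (Eat 1 0) (.conj P.1 P.2)) )
  | .fa :: q =>
    let P := psiRed q
    ( .fa (.disj (nEat 0 1) (.disj P.1 P.2)),
      .fa (.disj (nEat 1 0) (.disj P.1 P.2)) )

/-- `φ_{∃∃}`. -/
def phiEE : NNF tau 0 :=
  .ex (.conj (Eat 0 0)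
    (.conj (.ex (.conj (Eat 0 1) (.conj (Eat 1 0) (Eat 1 1))))
           (.ex (.conj (Eat 1 0) (.conj (Eat 0 1) (nEat 1 1))))))

/-- `φ_{∃∀}`. -/
def phiEA : NNF tau 0 :=
  .ex (.conj (Eat 0 0)
    (.conj (.fa (.disj (nEat 0 1) (.conj (Eat 1 0) (Eat 1 1))))
           (.fa (.disj (nEat 1 0) (.conj (Eat 0 1) (nEat 1 1))))))

/-- `φ_{∀∃}`. -/
def phiAE : NNF tau 0 :=
  .fa (.disj (nEat 0 0)
    (.disj (.ex (.conj (Eat 0 1) (.conj (Eat 1 0) (Eat 1 1))))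
           (.ex (.conj (Eat 1 0) (.conj (Eat 0 1) (nEat 1 1))))))

/-- `φ_{∀∀}`. -/
def phiAA : NNF tau 0 :=
  .fa (.disj (nEat 0 0)
    (.disj (.fa (.disj (nEat 0 1) (.conj (Eat 1 0) (Eat 1 1))))
           (.fa (.disj (nEat 1 0) (.conj (Eat 0 1) (nEat 1 1))))))

/-- The `τ`-sentence `φ_p`, obtained from `ψ'_p(r, r)` by replacing the atoms
involving the root by self-loops and removing the atoms `x ≠ r`; the ad hoc
sentences of the paper are used when `|p| = 2`. -/
def phiRed : List Quant → NNF tau 0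
  | [] => .verum
  | [Quant.ex, Quant.ex] => phiEE
  | [Quant.ex, Quant.fa] => phiEA
  | [Quant.fa, Quant.ex] => phiAE
  | [Quant.fa, Quant.fa] => phiAA
  | .ex :: q => .ex (.conj (Eat 0 0) (.conj (chiRed q).1 (chiRed q).2))
  | .fa :: q => .fa (.disj (nEat 0 0) (.disj (chiRed q).1 (chiRed q).2))

/-- The arc relation of the digraph obtained from the coloured tree `t` by the
reduction from `τ⁺` to `τ`:  red edges become forward arcs, blue edges become
backward arcs; arcs are added in both directions between every black leaf and
the junction point of its connected component (its ancestor just below the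
root); each edge from the (deleted) root to a junction point becomes a
self-loop at the junction point; and, when the condition `two` holds (i.e. when
`|p| = 2`), every leaf which is an endpoint of a red edge gets a self-loop. -/
def reducedE (t : CT) (two : Prop) (x y : List ℕ) : Prop :=
  t.edgeC true x y ∨ t.edgeC false y x ∨
  ((t.edgeC true [] x ∨ t.edgeC false [] x) ∧ x = y) ∨
  (t.blackAt x ∧ y = x.take 1) ∨ (t.blackAt y ∧ x = y.take 1) ∨
  (two ∧ x = y ∧ t.leafAt x ∧ ∃ z : List ℕ, t.edgeC true z x ∨ t.edgeC true x z)

/-- The non-root nodes of `t` (the universe after deleting the root). -/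
abbrev CT.NRNode (t : CT) : Type := {x : t.Node // x.1 ≠ []}

/-- Interpretation of `E`. -/
def redRelMap (t : CT) (two : Prop) : ∀ {n : ℕ}, TauRel n → (Fin n → t.NRNode) → Prop
  | _, .E, vv => reducedE t two (vv 0).1.1 (vv 1).1.1

/-- The digraph (`τ`-structure) obtained from `t` by the reduction from `τ⁺`
to `τ`. -/
def reducedStr (t : CT) (two : Prop) : tau.Structure t.NRNode where
  funMap := fun f => Empty.elim f
  RelMap := fun Rl => redRelMap t two Rl

/-- Satisfaction of a `τ`-sentence in the reduced digraph of `t`. -/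
def redSat (t : CT) (two : Prop) (φ : NNF tau 0) : Prop :=
  φ.Realize (reducedStr t two) fun i => i.elim0

end QSH
namespace QSH

/-! ### Rosen's map `f : Γ* → Γ_c*` -/

/-- The alphabet `Γ_c = {∃, ∀, ∃*, ∀*}`. -/
inductive QuantC : Type where
  | ex : QuantC
  | fa : QuantC
  | exStar : QuantC
  | faStar : QuantC
deriving DecidableEq

/-- The dual of a letter of Γ (swap `∃` and `∀`). -/
def Quant.dual : Quant → Quant
  | .ex => .fa
  | .fa => .ex

/-- The dual of a letter of `Γ_c` (swap `∃` with `∀` and `∃*` with `∀*`). -/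
def QuantC.dual : QuantC → QuantC
  | .ex => .fa
  | .fa => .ex
  | .exStar => .faStar
  | .faStar => .exStar

/-- `f` on a single maximal block: `f(∃ⁿ) = a₁ * ⋯ * a_{2n-1}` with `aᵢ = ∀*`
for odd `i` and `aᵢ = ∃` for even `i`, and dually for `f(∀ⁿ)`. -/
def fBlock : Quant → ℕ → List QuantC
  | .ex, n => QuantC.faStar :: (List.replicate (n - 1) [QuantC.ex, QuantC.faStar]).flatten
  | .fa, n => QuantC.exStar :: (List.replicate (n - 1) [QuantC.fa, QuantC.exStar]).flatten

/-- Rosen's map `f : Γ* → Γ_c*`: decompose `p` into maximal constant blocks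
`p = s₁^{i₁} * ⋯ * s_n^{i_n}` and concatenate the images of the blocks. -/
def fMap (p : List Quant) : List QuantC :=
  ((p.splitBy fun a b => a == b).map fun blk => fBlock blk.headI blk.length).flatten

end QSH
namespace QSH

open FirstOrder Language

/-! ### Joins of structures at a point, and automorphisms -/

/-- `e` is an automorphism of the (relational) structure `sA`. -/
def IsAuto {L : FirstOrder.Language} {A : Type*} (sA : L.Structure A) (e : A ≃ A) : Prop :=
  ∀ (n : ℕ) (R : L.Relations n) (vv : Fin n → A), sA.RelMap R vv ↔ sA.RelMap R (e ∘ vv)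

/-- The join `𝔄 ⊕ 𝔅` of two structures on subsets `A`, `B` of an ambient type:
the structure on `A ∪ B` in which each relation is interpreted as the union of
its interpretations in `𝔄` and `𝔅` (the signature is assumed relational). -/
def joinStructure {L : FirstOrder.Language} (hrel : ∀ n : ℕ, IsEmpty (L.Functions n))
    {Ω : Type} (A B : Set Ω) (sA : L.Structure ↥A) (sB : L.Structure ↥B) :
    L.Structure ↥(A ∪ B) where
  funMap := fun {n} f _ => ((hrel n).false f).elim
  RelMap := fun {n} R vv =>
    (∃ u : Fin n → ↥A, (∀ i, (u i : Ω) = (vv i : Ω)) ∧ sA.RelMap R u) ∨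
    (∃ u : Fin n → ↥B, (∀ i, (u i : Ω) = (vv i : Ω)) ∧ sB.RelMap R u)

end QSH

namespace QSH

open FirstOrder Language

/-! ### AUX: pattern automaton -/

local infixl:50 " <+ " => List.Sublist

/-- One step of the pattern automaton. -/
def pstep (s : Quant) (P : List Quant) : List Quant :=
  if P.head? = some s then P.tail else P

lemma pstep_sublist (s : Quant) (P : List Quant) : pstep s P <+ P := by
  unfold pstep; split
  · exact List.tail_sublist P
  · exact List.Sublist.refl P

lemma pstep_ne_nil {s : Quant} {P : List Quant} (h0 : P ≠ []) (h1 : P ≠ [s]) :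
    pstep s P ≠ [] := by
  match P with
  | [] => exact absurd rfl h0
  | a :: t =>
    unfold pstep
    split
    · rename_i hh
      simp only [List.head?_cons, Option.some.injEq] at hh
      subst hh
      intro ht
      simp only [List.tail_cons] at ht
      exact h1 (by rw [ht])
    · simp

lemma sublist_of_cons_of_ne {α : Type*} {a b : α} {l t : List α}
    (h : (a :: l) <+ (b :: t)) (hne : a ≠ b) : (a :: l) <+ t := by
  cases h with
  | cons _ h => exact h
  | cons_cons => exact absurd rfl hne

lemma pstep_cons_self (s : Quant) (t : List Quant) : pstep s (s :: t) = t := by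
  simp [pstep]

lemma pstep_cons_ne {s a : Quant} (t : List Quant) (hne : a ≠ s) :
    pstep s (a :: t) = a :: t := by
  unfold pstep
  rw [if_neg]
  simp only [List.head?_cons, Option.some.injEq]
  exact hne

lemma pstep_mono {s : Quant} {P' P : List Quant} (h : P' <+ P) (h' : P' ≠ [s]) :
    pstep s P' <+ pstep s P := by
  match P', P with
  | [], P => simpa [pstep] using List.nil_sublist _
  | a :: t', [] => exact absurd (List.sublist_nil.mp h) (by simp)
  | a :: t', b :: t =>
    by_cases ha : a = s
    · rw [ha] at h h' ⊢
      rw [pstep_cons_self]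
      by_cases hb : b = s
      · rw [hb] at h ⊢
        rw [pstep_cons_self]
        cases h with
        | cons _ h => exact (List.sublist_cons_self s t').trans h
        | cons_cons _ h => exact h
      · have h2 : (s :: t') <+ t := sublist_of_cons_of_ne h (fun hh => hb hh.symm)
        rw [pstep_cons_ne t hb]
        exact ((List.sublist_cons_self s t').trans h2).trans (List.sublist_cons_self b t)
    · rw [pstep_cons_ne t' ha]
      by_cases hb : b = s
      · rw [hb] at h ⊢
        rw [pstep_cons_self]
        exact sublist_of_cons_of_ne h ha
      · rw [pstep_cons_ne t hb]
        exact h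

/-- Residual pattern after a word. -/
def pres (P : List Quant) (u : List Quant) : List Quant :=
  u.foldl (fun P s => pstep s P) P

@[simp] lemma pres_nil (P : List Quant) : pres P [] = P := rfl

lemma pres_append (P : List Quant) (u : List Quant) (s : Quant) :
    pres P (u ++ [s]) = pstep s (pres P u) := by
  simp [pres, List.foldl_append]

lemma pstep_sublist_iff {s : Quant} {P : List Quant} {u : List Quant} :
    pstep s P <+ u ↔ P <+ s :: u := by
  match P with
  | [] => simp [pstep]
  | a :: t =>
    by_cases ha : a = s
    · rw [ha, pstep_cons_self]
      exact (List.cons_sublist_cons (a := s)).symm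
    · rw [pstep_cons_ne t ha]
      constructor
      · exact fun hh => hh.trans (List.sublist_cons_self s u)
      · exact fun hh => sublist_of_cons_of_ne hh ha

lemma pres_eq_nil_iff {u P : List Quant} : pres P u = [] ↔ P <+ u := by
  induction u generalizing P with
  | nil => simp [pres, List.sublist_nil]
  | cons s u ih =>
    have : pres P (s :: u) = pres (pstep s P) u := rfl
    rw [this, ih, pstep_sublist_iff]

/-! ### AUX: atomic partial isomorphisms for coloured trees -/

/-- Atomic partial-isomorphism condition on a history of picked pairs,
together with the pair of roots. -/
def TOK (s t : CT) (h : List (s.Node × t.Node)) : Prop :=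
  ∀ x ∈ (s.rootNode, t.rootNode) :: h, ∀ y ∈ (s.rootNode, t.rootNode) :: h,
    (x.1 = y.1 ↔ x.2 = y.2) ∧
    (s.blackAt x.1.1 ↔ t.blackAt x.2.1) ∧
    (∀ col, s.edgeC col x.1.1 y.1.1 ↔ t.edgeC col x.2.1 y.2.1)

lemma TOK_diag (Z : CT) (h : List (Z.Node × Z.Node)) (hd : ∀ z ∈ h, z.1 = z.2) :
    TOK Z Z h := by
  intro x hx y hy
  have hx1 : x.1 = x.2 := by
    rcases List.mem_cons.mp hx with rfl | hx
    · rfl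
    · exact hd x hx
  have hy1 : y.1 = y.2 := by
    rcases List.mem_cons.mp hy with rfl | hy
    · rfl
    · exact hd y hy
  rw [hx1, hy1]
  exact ⟨Iff.rfl, Iff.rfl, fun _ => Iff.rfl⟩

/-! ### AUX: the survival predicate -/

/-- The duplicator can survive `k` more rounds on `(s, t)` with history `h`,
provided every play prefix keeps the residual pattern nonempty. -/
def TSurv (s t : CT) : List Quant → ℕ → List (s.Node × t.Node) → Prop
  | _, 0, _ => True
  | P, k+1, h =>
    (P ≠ [.ex] → ∀ a : s.Node, ∃ b : t.Node,
        TOK s t (h ++ [(a,b)]) ∧ TSurv s t (pstep .ex P) k (h ++ [(a,b)])) ∧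
    (P ≠ [.fa] → ∀ b : t.Node, ∃ a : s.Node,
        TOK s t (h ++ [(a,b)]) ∧ TSurv s t (pstep .fa P) k (h ++ [(a,b)]))

lemma eq_single_of_sublist {P' : List Quant} {sq : Quant} (h : P' <+ [sq])
    (h0 : P' ≠ []) : P' = [sq] := by
  cases h with
  | cons _ h' => exact absurd (List.sublist_nil.mp h') h0
  | cons_cons _ h' => simp [List.sublist_nil.mp h']

lemma ne_single_of_sublist {P' P : List Quant} {sq : Quant} (h : P' <+ P)
    (h0 : P' ≠ []) (h1 : P' ≠ [sq]) : P ≠ [sq] := by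
  intro hP
  rw [hP] at h
  exact h1 (eq_single_of_sublist h h0)

lemma TSurv_mono (s t : CT) :
    ∀ (k' k : ℕ) (P' P : List Quant) (h : List (s.Node × t.Node)),
    k' ≤ k → P' ≠ [] → P' <+ P → TSurv s t P k h → TSurv s t P' k' h := by
  intro k'
  induction k' with
  | zero => intro _ _ _ _ _ _ _ _; trivial
  | succ k' ih =>
    intro k P' P h hk h0 hPP hS
    match k, hk with
    | k'' + 1, hk =>
      have hk2 : k' ≤ k'' := Nat.succ_le_succ_iff.mp hk
      obtain ⟨hE, hF⟩ := hS
      constructor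
      · intro hne a
        obtain ⟨b, hok, hS'⟩ := hE (ne_single_of_sublist hPP h0 hne) a
        exact ⟨b, hok, ih k'' _ _ _ hk2 (pstep_ne_nil h0 hne) (pstep_mono hPP hne) hS'⟩
      · intro hne b
        obtain ⟨a, hok, hS'⟩ := hF (ne_single_of_sublist hPP h0 hne) b
        exact ⟨a, hok, ih k'' _ _ _ hk2 (pstep_ne_nil h0 hne) (pstep_mono hPP hne) hS'⟩

lemma TSurv_refl (Z : CT) :
    ∀ (k : ℕ) (P : List Quant) (h : List (Z.Node × Z.Node)),
    (∀ z ∈ h, z.1 = z.2) → TSurv Z Z P k h := by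
  intro k
  induction k with
  | zero => intro _ _ _; trivial
  | succ k ih =>
    intro P h hd
    have hd' : ∀ a : Z.Node, ∀ z ∈ h ++ [(a, a)], z.1 = z.2 := by
      intro a z hz
      rcases List.mem_append.mp hz with hz | hz
      · exact hd z hz
      · simp only [List.mem_singleton] at hz; rw [hz]
    exact ⟨fun _ a => ⟨a, TOK_diag Z _ (hd' a), ih _ _ (hd' a)⟩,
           fun _ a => ⟨a, TOK_diag Z _ (hd' a), ih _ _ (hd' a)⟩⟩

/-! ### AUX: bridge from `TOK` to `HistOK` -/

lemma termRealize_cases {n : ℕ} (tm : tauPlus.Term (Fin n)) :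
    (∃ i, tm = Term.var i) ∨
      ∀ (T : CT) (vm : Fin n → T.Node), TermRealize T.Str vm tm = T.rootNode := by
  cases tm with
  | var i => exact Or.inl ⟨i, rfl⟩
  | func f ts =>
    right; intro T vm
    cases f
    rfl

lemma TOK_histOK {s t : CT} {h : List (s.Node × t.Node)} (H : TOK s t h) :
    HistOK s.Str t.Str h := by
  classical
  set as : Fin h.length → s.Node := fun i => (h.get i).1 with has
  set bs : Fin h.length → t.Node := fun i => (h.get i).2 with hbs
  have key : ∀ tm : tauPlus.Term (Fin h.length),
      ∃ z ∈ (s.rootNode, t.rootNode) :: h,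
        TermRealize s.Str as tm = z.1 ∧ TermRealize t.Str bs tm = z.2 := by
    intro tm
    rcases termRealize_cases tm with ⟨i, rfl⟩ | hr
    · exact ⟨h.get i, List.mem_cons_of_mem _ (by simpa using List.get_mem h i.1 i.2), rfl, rfl⟩
    · exact ⟨(s.rootNode, t.rootNode), List.mem_cons_self, hr s as, hr t bs⟩
  constructor
  · intro t₁ t₂
    obtain ⟨z, hz, hz1, hz2⟩ := key t₁
    obtain ⟨w, hw, hw1, hw2⟩ := key t₂
    rw [hz1, hz2, hw1, hw2]
    exact (H z hz w hw).1
  · intro mm R ts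
    cases R with
    | U =>
      obtain ⟨z, hz, hz1, hz2⟩ := key (ts 0)
      show s.blackAt (TermRealize s.Str as (ts 0)).1 ↔ t.blackAt (TermRealize t.Str bs (ts 0)).1
      rw [hz1, hz2]
      exact (H z hz z hz).2.1
    | R =>
      obtain ⟨z, hz, hz1, hz2⟩ := key (ts 0)
      obtain ⟨w, hw, hw1, hw2⟩ := key (ts 1)
      show s.edgeC true (TermRealize s.Str as (ts 0)).1 (TermRealize s.Str as (ts 1)).1 ↔
        t.edgeC true (TermRealize t.Str bs (ts 0)).1 (TermRealize t.Str bs (ts 1)).1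
      rw [hz1, hz2, hw1, hw2]
      exact (H z hz w hw).2.2 true
    | B =>
      obtain ⟨z, hz, hz1, hz2⟩ := key (ts 0)
      obtain ⟨w, hw, hw1, hw2⟩ := key (ts 1)
      show s.edgeC false (TermRealize s.Str as (ts 0)).1 (TermRealize s.Str as (ts 1)).1 ↔
        t.edgeC false (TermRealize t.Str bs (ts 0)).1 (TermRealize t.Str bs (ts 1)).1
      rw [hz1, hz2, hw1, hw2]
      exact (H z hz w hw).2.2 false

end QSH

namespace QSH

local infixl:50 " <+ " => List.Sublist

/-! ### AUX: basic coloured-tree address lemmas -/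

lemma CT.sub_cons_of_get {t : CT} {i : ℕ} {pr : Bool × CT}
    (hp : t.children[i]? = some pr) (x : List ℕ) :
    CT.sub (i :: x) t = CT.sub x pr.2 := by
  show (match t.children[i]? with
    | some p => CT.sub x p.2
    | none => none) = CT.sub x pr.2
  rw [hp]

lemma CT.sub_cons_none {t : CT} {i : ℕ} (hp : t.children[i]? = none) (x : List ℕ) :
    CT.sub (i :: x) t = none := by
  show (match t.children[i]? with
    | some p => CT.sub x p.2
    | none => none) = none
  rw [hp]

lemma CT.node_dest (t : CT) (x : t.Node) :
    x.1 = [] ∨ ∃ (i : ℕ) (rest : List ℕ) (pr : Bool × CT),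
      x.1 = i :: rest ∧ t.children[i]? = some pr ∧ (CT.sub rest pr.2).isSome = true := by
  obtain ⟨addr, hx⟩ := x
  match addr with
  | [] => exact Or.inl rfl
  | i :: rest =>
    right
    refine ⟨i, rest, ?_⟩
    match hp : t.children[i]? with
    | some pr =>
      refine ⟨pr, rfl, rfl, ?_⟩
      rw [CT.sub_cons_of_get hp] at hx
      exact hx
    | none =>
      rw [CT.sub_cons_none hp] at hx
      simp at hx

lemma CT.eq_root_of_addr_nil {t : CT} {x : t.Node} (h : x.1 = []) : x = t.rootNode :=
  Subtype.ext h

/-- The child embedding. -/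
def CT.chN (t : CT) {i : ℕ} {pr : Bool × CT} (hp : t.children[i]? = some pr)
    (x : pr.2.Node) : t.Node :=
  ⟨i :: x.1, by rw [CT.sub_cons_of_get hp]; exact x.2⟩

@[simp] lemma CT.chN_addr (t : CT) {i : ℕ} {pr : Bool × CT}
    (hp : t.children[i]? = some pr) (x : pr.2.Node) : (t.chN hp x).1 = i :: x.1 := rfl

lemma CT.blackAt_cons {t : CT} {i : ℕ} {pr : Bool × CT}
    (hp : t.children[i]? = some pr) (x : List ℕ) :
    t.blackAt (i :: x) ↔ pr.2.blackAt x := by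
  unfold CT.blackAt
  rw [CT.sub_cons_of_get hp]

lemma CT.blackAt_nil (t : CT) : t.blackAt [] ↔ t.isBlack = true := by
  unfold CT.blackAt
  constructor
  · rintro ⟨s, hs, hb⟩
    have ht : t = s := Option.some.inj hs
    rw [ht]; exact hb
  · exact fun h => ⟨t, rfl, h⟩

lemma CT.edgeC_nil {t : CT} {col : Bool} {y : List ℕ} :
    t.edgeC col [] y ↔ ∃ (i : ℕ) (pr : Bool × CT),
      t.children[i]? = some pr ∧ pr.1 = col ∧ y = [i] := by
  unfold CT.edgeC
  constructor
  · rintro ⟨i, s, p, hs, hp, hcol, hy⟩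
    rw [show t = s from Option.some.inj hs] at *
    exact ⟨i, p, hp, hcol, by simpa using hy⟩
  · rintro ⟨i, pr, hp, hcol, hy⟩
    exact ⟨i, t, pr, rfl, hp, hcol, by simpa using hy⟩

lemma CT.not_edgeC_to_nil {t : CT} {col : Bool} {x : List ℕ} :
    ¬ t.edgeC col x [] := by
  rintro ⟨i, s, p, _, _, _, hy⟩
  exact absurd hy.symm (by simp)

lemma CT.edgeC_cons {t : CT} {col : Bool} {i : ℕ} {pr : Bool × CT}
    (hp : t.children[i]? = some pr) (x y : List ℕ) :
    t.edgeC col (i :: x) y ↔ ∃ y', y = i :: y' ∧ pr.2.edgeC col x y' := by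
  unfold CT.edgeC
  constructor
  · rintro ⟨j, s, p, hs, hpp, hcol, hy⟩
    rw [CT.sub_cons_of_get hp] at hs
    exact ⟨x ++ [j], by simpa using hy, j, s, p, hs, hpp, hcol, rfl⟩
  · rintro ⟨y', hy, j, s, p, hs, hpp, hcol, hy'⟩
    exact ⟨j, s, p, by rw [CT.sub_cons_of_get hp]; exact hs, hpp, hcol,
      by rw [hy, hy']; rfl⟩

lemma CT.edgeC_cons_cons {t : CT} {col : Bool} {i j : ℕ} {pr : Bool × CT}
    (hp : t.children[i]? = some pr) (x y : List ℕ) :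
    t.edgeC col (i :: x) (j :: y) ↔ i = j ∧ pr.2.edgeC col x y := by
  rw [CT.edgeC_cons hp]
  constructor
  · rintro ⟨y', hy, he⟩
    obtain ⟨rfl, rfl⟩ : j = i ∧ y = y' := by
      constructor <;> [exact (List.cons.injEq .. ▸ hy).1; exact (List.cons.injEq .. ▸ hy).2]
    exact ⟨rfl, he⟩
  · rintro ⟨rfl, he⟩
    exact ⟨y, rfl, he⟩

/-! ### AUX: swap lemmas -/

lemma CT.children_swap (t : CT) :
    t.swap.children = t.children.map (fun p => (!p.1, CT.swap p.2)) := by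
  cases t with
  | node b cs =>
    rw [CT.swap]
    show (cs.attach.map fun p => (!p.1.1, CT.swap p.1.2)) = cs.map fun p => (!p.1, CT.swap p.2)
    exact List.attach_map_val (l := cs) (f := fun p => (!p.1, CT.swap p.2))

lemma CT.isBlack_swap (t : CT) : t.swap.isBlack = t.isBlack := by
  cases t
  rw [CT.swap]
  rfl

lemma CT.sub_swap (x : List ℕ) (t : CT) :
    CT.sub x t.swap = (CT.sub x t).map CT.swap := by
  induction x generalizing t with
  | nil => rfl
  | cons i rest ih =>
    have hch : t.swap.children[i]? = (t.children[i]?).map (fun p => (!p.1, CT.swap p.2)) := by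
      rw [CT.children_swap, List.getElem?_map]
    match hp : t.children[i]? with
    | some pr =>
      rw [hp, Option.map_some] at hch
      rw [CT.sub_cons_of_get hch, CT.sub_cons_of_get hp, ih]
    | none =>
      rw [hp, Option.map_none] at hch
      rw [CT.sub_cons_none hch, CT.sub_cons_none hp]
      rfl

lemma CT.isSome_sub_swap (x : List ℕ) (t : CT) :
    (CT.sub x t.swap).isSome = (CT.sub x t).isSome := by
  rw [CT.sub_swap]
  cases CT.sub x t <;> rfl

/-- Transport of nodes to the colour-swapped tree (same address). -/
def CT.swN (t : CT) (x : t.Node) : t.swap.Node :=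
  ⟨x.1, by rw [CT.isSome_sub_swap]; exact x.2⟩

lemma CT.swN_inj {t : CT} {x y : t.Node} : t.swN x = t.swN y ↔ x = y := by
  constructor
  · intro h
    have h2 : (t.swN x).1 = (t.swN y).1 := by rw [h]
    exact Subtype.ext h2
  · rintro rfl; rfl

lemma CT.blackAt_swap (t : CT) (x : List ℕ) : t.swap.blackAt x ↔ t.blackAt x := by
  unfold CT.blackAt
  rw [CT.sub_swap]
  constructor
  · rintro ⟨s, hs, hb⟩
    match hs0 : CT.sub x t with
    | some s0 =>
      rw [hs0, Option.map_some] at hs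
      refine ⟨s0, rfl, ?_⟩
      rw [← Option.some.inj hs, CT.isBlack_swap] at hb
      exact hb
    | none => rw [hs0] at hs; simp at hs
  · rintro ⟨s, hs, hb⟩
    exact ⟨s.swap, by rw [hs]; rfl, by rw [CT.isBlack_swap]; exact hb⟩

lemma CT.edgeC_swap (t : CT) (col : Bool) (x y : List ℕ) :
    t.swap.edgeC col x y ↔ t.edgeC (!col) x y := by
  unfold CT.edgeC
  constructor
  · rintro ⟨i, s, p, hs, hp, hcol, hy⟩
    rw [CT.sub_swap] at hs
    match hs0 : CT.sub x t with
    | some s0 =>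
      rw [hs0, Option.map_some] at hs
      rw [← Option.some.inj hs, CT.children_swap, List.getElem?_map] at hp
      match hp0 : s0.children[i]? with
      | some p0 =>
        rw [hp0, Option.map_some] at hp
        refine ⟨i, s0, p0, rfl, hp0, ?_, hy⟩
        rw [← Option.some.inj hp] at hcol
        simp only at hcol
        rw [← hcol, Bool.not_not]
      | none => rw [hp0] at hp; simp at hp
    | none => rw [hs0] at hs; simp at hs
  · rintro ⟨i, s, p, hs, hp, hcol, hy⟩
    refine ⟨i, s.swap, (!p.1, p.2.swap), by rw [CT.sub_swap, hs]; rfl, ?_, by rw [hcol, Bool.not_not], hy⟩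
    rw [CT.children_swap, List.getElem?_map, hp]
    rfl

lemma CT.rootNode_swap (t : CT) : t.swap.rootNode = t.swN t.rootNode := rfl

lemma TOK_swap {s t : CT} {h : List (s.Node × t.Node)} (H : TOK s t h) :
    TOK s.swap t.swap (h.map fun z => (s.swN z.1, t.swN z.2)) := by
  intro x hx y hy
  have hmem : ∀ z ∈ (s.swap.rootNode, t.swap.rootNode) ::
      (h.map fun z => (s.swN z.1, t.swN z.2)),
      ∃ z0 ∈ (s.rootNode, t.rootNode) :: h, z = (s.swN z0.1, t.swN z0.2) := by
    intro z hz
    rcases List.mem_cons.mp hz with rfl | hz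
    · exact ⟨(s.rootNode, t.rootNode), List.mem_cons_self, rfl⟩
    · obtain ⟨z0, hz0, rfl⟩ := List.mem_map.mp hz
      exact ⟨z0, List.mem_cons_of_mem _ hz0, rfl⟩
  obtain ⟨x0, hx0, rfl⟩ := hmem x hx
  obtain ⟨y0, hy0, rfl⟩ := hmem y hy
  obtain ⟨heq, hbl, hed⟩ := H x0 hx0 y0 hy0
  refine ⟨?_, ?_, ?_⟩
  · simp only [CT.swN_inj]
    exact heq
  · show s.swap.blackAt x0.1.1 ↔ t.swap.blackAt x0.2.1
    rw [CT.blackAt_swap, CT.blackAt_swap]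
    exact hbl
  · intro col
    show s.swap.edgeC col x0.1.1 y0.1.1 ↔ t.swap.edgeC col x0.2.1 y0.2.1
    rw [CT.edgeC_swap, CT.edgeC_swap]
    exact hed (!col)

lemma TSurv_swap {s t : CT} :
    ∀ (k : ℕ) (P : List Quant) (h : List (s.Node × t.Node)),
    TSurv s t P k h → TSurv s.swap t.swap P k (h.map fun z => (s.swN z.1, t.swN z.2)) := by
  intro k
  induction k with
  | zero => intro _ _ _; trivial
  | succ k ih =>
    intro P h hS
    obtain ⟨hE, hF⟩ := hS
    constructor
    · intro hne a'
      set a : s.Node := ⟨a'.1, by rw [← CT.isSome_sub_swap]; exact a'.2⟩ with ha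
      obtain ⟨b, hok, hS'⟩ := hE hne a
      refine ⟨t.swN b, ?_, ?_⟩
      · have : (h.map fun z => (s.swN z.1, t.swN z.2)) ++ [(a', t.swN b)] =
            (h ++ [(a, b)]).map fun z => (s.swN z.1, t.swN z.2) := by
          rw [List.map_append]
          rfl
        rw [this]
        exact TOK_swap hok
      · have : (h.map fun z => (s.swN z.1, t.swN z.2)) ++ [(a', t.swN b)] =
            (h ++ [(a, b)]).map fun z => (s.swN z.1, t.swN z.2) := by
          rw [List.map_append]
          rfl
        rw [this]
        exact ih _ _ hS'
    · intro hne b'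
      set b : t.Node := ⟨b'.1, by rw [← CT.isSome_sub_swap]; exact b'.2⟩ with hb
      obtain ⟨a, hok, hS'⟩ := hF hne b
      refine ⟨s.swN a, ?_, ?_⟩
      · have : (h.map fun z => (s.swN z.1, t.swN z.2)) ++ [(s.swN a, b')] =
            (h ++ [(a, b)]).map fun z => (s.swN z.1, t.swN z.2) := by
          rw [List.map_append]
          rfl
        rw [this]
        exact TOK_swap hok
      · have : (h.map fun z => (s.swN z.1, t.swN z.2)) ++ [(s.swN a, b')] =
            (h ++ [(a, b)]).map fun z => (s.swN z.1, t.swN z.2) := by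
          rw [List.map_append]
          rfl
        rw [this]
        exact ih _ _ hS'

end QSH

namespace QSH

local infixl:50 " <+ " => List.Sublist

/-! ### AUX: strong embeddings and the base cases -/

lemma TOK_embed_fa {s t : CT} (e : t.Node → s.Node)
    (he_root : e t.rootNode = s.rootNode)
    (he_inj : ∀ x y, e x = e y → x = y)
    (he_black : ∀ x, s.blackAt (e x).1 ↔ t.blackAt x.1)
    (he_edge : ∀ col x y, s.edgeC col (e x).1 (e y).1 ↔ t.edgeC col x.1 y.1)
    (h : List (s.Node × t.Node)) (hd : ∀ z ∈ h, z.1 = e z.2) :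
    TOK s t h := by
  have hmem : ∀ z ∈ (s.rootNode, t.rootNode) :: h, z.1 = e z.2 := by
    intro z hz
    rcases List.mem_cons.mp hz with rfl | hz
    · exact he_root.symm
    · exact hd z hz
  intro x hx y hy
  rw [hmem x hx, hmem y hy]
  refine ⟨⟨fun hh => he_inj _ _ hh, fun hh => by rw [hh]⟩, he_black x.2, fun col => he_edge col x.2 y.2⟩

lemma TSurv_embed_fa {s t : CT} (e : t.Node → s.Node)
    (he_root : e t.rootNode = s.rootNode)
    (he_inj : ∀ x y, e x = e y → x = y)
    (he_black : ∀ x, s.blackAt (e x).1 ↔ t.blackAt x.1)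
    (he_edge : ∀ col x y, s.edgeC col (e x).1 (e y).1 ↔ t.edgeC col x.1 y.1) :
    ∀ (k : ℕ) (h : List (s.Node × t.Node)), (∀ z ∈ h, z.1 = e z.2) →
    TSurv s t [Quant.ex] k h := by
  intro k
  induction k with
  | zero => intro _ _; trivial
  | succ k ih =>
    intro h hd
    constructor
    · intro hne; exact absurd rfl hne
    · intro _ b
      have hd' : ∀ z ∈ h ++ [(e b, b)], z.1 = e z.2 := by
        intro z hz
        rcases List.mem_append.mp hz with hz | hz
        · exact hd z hz
        · simp only [List.mem_singleton] at hz; rw [hz]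
      have hstep : pstep Quant.fa [Quant.ex] = [Quant.ex] :=
        pstep_cons_ne _ (by decide)
      refine ⟨e b, TOK_embed_fa e he_root he_inj he_black he_edge _ hd', ?_⟩
      rw [hstep]
      exact ih _ hd'

lemma TSurv_embed_ex {s t : CT} (e : s.Node → t.Node)
    (he_root : e s.rootNode = t.rootNode)
    (he_inj : ∀ x y, e x = e y → x = y)
    (he_black : ∀ x, s.blackAt x.1 ↔ t.blackAt (e x).1)
    (he_edge : ∀ col x y, s.edgeC col x.1 y.1 ↔ t.edgeC col (e x).1 (e y).1) :
    ∀ (k : ℕ) (h : List (s.Node × t.Node)), (∀ z ∈ h, z.2 = e z.1) →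
    TSurv s t [Quant.fa] k h := by
  intro k
  induction k with
  | zero => intro _ _; trivial
  | succ k ih =>
    intro h hd
    have hTOK : ∀ (h' : List (s.Node × t.Node)), (∀ z ∈ h', z.2 = e z.1) → TOK s t h' := by
      intro h' hd'
      have hmem : ∀ z ∈ (s.rootNode, t.rootNode) :: h', z.2 = e z.1 := by
        intro z hz
        rcases List.mem_cons.mp hz with rfl | hz
        · exact he_root.symm
        · exact hd' z hz
      intro x hx y hy
      rw [hmem x hx, hmem y hy]
      exact ⟨⟨fun hh => by rw [hh], fun hh => he_inj _ _ hh⟩, he_black x.1,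
        fun col => he_edge col x.1 y.1⟩
    constructor
    · intro _ a
      have hd' : ∀ z ∈ h ++ [(a, e a)], z.2 = e z.1 := by
        intro z hz
        rcases List.mem_append.mp hz with hz | hz
        · exact hd z hz
        · simp only [List.mem_singleton] at hz; rw [hz]
      have hstep : pstep Quant.ex [Quant.fa] = [Quant.fa] :=
        pstep_cons_ne _ (by decide)
      refine ⟨e a, hTOK _ hd', ?_⟩
      rw [hstep]
      exact ih _ hd'
    · intro hne; exact absurd rfl hne

/-! starT facts -/

lemma starT_children (kb kw : ℕ) :
    (starT kb kw).children =
      List.replicate kb (true, CT.node true []) ++ List.replicate kw (true, CT.node false []) := rfl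

lemma starT_isBlack (kb kw : ℕ) : (starT kb kw).isBlack = false := rfl

lemma starT_get (kb kw i : ℕ) :
    (starT kb kw).children[i]? =
      if i < kb then some (true, CT.node true [])
      else if i < kb + kw then some (true, CT.node false []) else none := by
  rw [starT_children, List.getElem?_append]
  simp only [List.length_replicate, List.getElem?_replicate]
  split_ifs <;> first | rfl | (exfalso; omega)

lemma leaf_no_sub {c : Bool} {i : ℕ} {rest : List ℕ} :
    CT.sub (i :: rest) (CT.node c []) = none := by
  apply CT.sub_cons_none
  simp [CT.children]

lemma leaf_no_edge {c : Bool} {col : Bool} {x y : List ℕ} :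
    ¬ (CT.node c []).edgeC col x y := by
  rintro ⟨i, s, p, hs, hp, _, _⟩
  match x with
  | [] =>
    have : (CT.node c []) = s := Option.some.inj hs
    rw [← this] at hp
    simp [CT.children] at hp
  | j :: rest =>
    rw [leaf_no_sub] at hs
    simp at hs

lemma starT_node_addr {kb kw : ℕ} (x : (starT kb kw).Node) :
    x.1 = [] ∨ ∃ i, i < kb + kw ∧ x.1 = [i] := by
  rcases CT.node_dest _ x with h | ⟨i, rest, pr, hx, hp, hsub⟩
  · exact Or.inl h
  · right
    rw [starT_get] at hp
    have hi : i < kb + kw := by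
      by_cases h1 : i < kb
      · omega
      · by_cases h2 : i < kb + kw
        · exact h2
        · rw [if_neg h1, if_neg h2] at hp; simp at hp
    have hpr : pr.2 = CT.node true [] ∨ pr.2 = CT.node false [] := by
      by_cases h1 : i < kb
      · rw [if_pos h1] at hp; left; rw [← Option.some.inj hp]
      · rw [if_neg h1, if_pos hi] at hp; right; rw [← Option.some.inj hp]
    have hrest : rest = [] := by
      match rest with
      | [] => rfl
      | j :: rest' =>
        rcases hpr with hpr | hpr <;> rw [hpr, leaf_no_sub] at hsub <;> simp at hsub
    exact ⟨i, hi, by rw [hx, hrest]⟩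

lemma starT_blackAt_single {kb kw i : ℕ} (hi : i < kb + kw) :
    ((starT kb kw).blackAt [i] ↔ i < kb) := by
  by_cases h1 : i < kb
  · have hp : (starT kb kw).children[i]? = some (true, CT.node true []) := by
      rw [starT_get, if_pos h1]
    rw [CT.blackAt_cons hp]
    simp only [CT.blackAt_nil]
    exact ⟨fun _ => h1, fun _ => rfl⟩
  · have hp : (starT kb kw).children[i]? = some (true, CT.node false []) := by
      rw [starT_get, if_neg h1, if_pos hi]
    rw [CT.blackAt_cons hp]
    simp only [CT.blackAt_nil]
    constructor
    · intro h; exact absurd h (by simp [CT.isBlack])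
    · intro h; exact absurd h h1

lemma starT_edge_nil {kb kw : ℕ} {col : Bool} {y : List ℕ} :
    (starT kb kw).edgeC col [] y ↔ col = true ∧ ∃ i, i < kb + kw ∧ y = [i] := by
  rw [CT.edgeC_nil]
  constructor
  · rintro ⟨i, pr, hp, hcol, hy⟩
    rw [starT_get] at hp
    by_cases h1 : i < kb
    · rw [if_pos h1] at hp
      rw [← Option.some.inj hp] at hcol
      exact ⟨hcol.symm, i, by omega, hy⟩
    · by_cases h2 : i < kb + kw
      · rw [if_neg h1, if_pos h2] at hp
        rw [← Option.some.inj hp] at hcol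
        exact ⟨hcol.symm, i, h2, hy⟩
      · rw [if_neg h1, if_neg h2] at hp; simp at hp
  · rintro ⟨rfl, i, hi, rfl⟩
    by_cases h1 : i < kb
    · exact ⟨i, _, by rw [starT_get, if_pos h1], rfl, rfl⟩
    · exact ⟨i, _, by rw [starT_get, if_neg h1, if_pos hi], rfl, rfl⟩

lemma starT_edge_single {kb kw i : ℕ} (hi : i < kb + kw) {col : Bool} {y : List ℕ} :
    ¬ (starT kb kw).edgeC col [i] y := by
  intro h
  by_cases h1 : i < kb
  · have hp : (starT kb kw).children[i]? = some (true, CT.node true []) := by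
      rw [starT_get, if_pos h1]
    rw [CT.edgeC_cons hp] at h
    obtain ⟨y', _, h⟩ := h
    exact leaf_no_edge h
  · have hp : (starT kb kw).children[i]? = some (true, CT.node false []) := by
      rw [starT_get, if_neg h1, if_pos hi]
    rw [CT.edgeC_cons hp] at h
    obtain ⟨y', _, h⟩ := h
    exact leaf_no_edge h

/-! The two base cases -/

lemma Atil_cons (s : Quant) (q : List Quant) (m : ℕ) : Atil (s :: q) m = (ABt s q m).1 := rfl
lemma Btil_cons (s : Quant) (q : List Quant) (m : ℕ) : Btil (s :: q) m = (ABt s q m).2 := rfl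

lemma ABt_ex_nil (m : ℕ) : ABt Quant.ex [] m = (starT 1 (2 * m), starT 0 (2 * m)) := by
  rw [ABt]

lemma ABt_fa_nil (m : ℕ) : ABt Quant.fa [] m = (starT (2 * m) 0, starT (2 * m) 1) := by
  rw [ABt]

lemma TSurv_base (s : Quant) (m : ℕ) (k : ℕ) :
    TSurv (Atil [s] m) (Btil [s] m) [s] k [] := by
  cases s with
  | ex =>
    have hA : Atil [Quant.ex] m = starT 1 (2 * m) := by rw [Atil_cons, ABt_ex_nil]
    have hB : Btil [Quant.ex] m = starT 0 (2 * m) := by rw [Btil_cons, ABt_ex_nil]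
    rw [hA, hB]
    set sA := starT 1 (2 * m)
    set tB := starT 0 (2 * m)
    have eval : ∀ x : tB.Node, (CT.sub (x.1.map (· + 1)) sA).isSome = true := by
      intro x
      rcases starT_node_addr x with h | ⟨i, hi, h⟩
      · rw [h]; rfl
      · rw [h]
        show (CT.sub [i+1] sA).isSome = true
        have hp : sA.children[i+1]? = some (true, CT.node false []) := by
          show (starT 1 (2*m)).children[i+1]? = _
          rw [starT_get, if_neg (by omega), if_pos (by omega)]
        rw [CT.sub_cons_of_get hp]
        rfl
    set e : tB.Node → sA.Node := fun x => ⟨x.1.map (· + 1), eval x⟩ with he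
    apply TSurv_embed_fa e
    · exact Subtype.ext rfl
    · intro x y hxy
      have h2 : x.1.map (· + 1) = y.1.map (· + 1) := congrArg Subtype.val hxy
      exact Subtype.ext (List.map_injective_iff.mpr (fun a b hab => by omega) h2)
    · intro x
      rcases starT_node_addr x with h | ⟨i, hi, h⟩
      · have hh : (e x).1 = [] := by simp [he, h]
        rw [hh, h, CT.blackAt_nil, CT.blackAt_nil]
        rw [show sA.isBlack = false from rfl, show tB.isBlack = false from rfl]
      · have h2 : (e x).1 = [i + 1] := by simp [he, h]
        rw [h2, h]
        rw [starT_blackAt_single (show i + 1 < 1 + 2*m by omega),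
          starT_blackAt_single (show i < 0 + 2*m by omega)]
        omega
    · intro col x y
      rcases starT_node_addr x with hx | ⟨i, hi, hx⟩
      · have hex : (e x).1 = [] := by simp [he, hx]
        rw [hex, hx]
        rcases starT_node_addr y with hy | ⟨j, hj, hy⟩
        · have hey : (e y).1 = [] := by simp [he, hy]
          rw [hey, hy]
          rw [starT_edge_nil, starT_edge_nil]
          simp
        · have hey : (e y).1 = [j + 1] := by simp [he, hy]
          rw [hey, hy]
          rw [starT_edge_nil, starT_edge_nil]
          constructor
          · rintro ⟨rfl, -⟩
            exact ⟨rfl, j, by omega, rfl⟩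
          · rintro ⟨rfl, -⟩
            exact ⟨rfl, j + 1, by omega, rfl⟩
      · have hex : (e x).1 = [i + 1] := by simp [he, hx]
        rw [hex, hx]
        constructor
        · intro h; exact absurd h (starT_edge_single (by omega))
        · intro h; exact absurd h (starT_edge_single (by omega))
    · intro z hz; simp at hz
  | fa =>
    have hA : Atil [Quant.fa] m = starT (2 * m) 0 := by rw [Atil_cons, ABt_fa_nil]
    have hB : Btil [Quant.fa] m = starT (2 * m) 1 := by rw [Btil_cons, ABt_fa_nil]
    rw [hA, hB]
    set sA := starT (2 * m) 0
    set tB := starT (2 * m) 1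
    have eval : ∀ x : sA.Node, (CT.sub x.1 tB).isSome = true := by
      intro x
      rcases starT_node_addr x with h | ⟨i, hi, h⟩
      · rw [h]; rfl
      · rw [h]
        have hp : tB.children[i]? = some (true, CT.node true []) := by
          show (starT (2*m) 1).children[i]? = _
          rw [starT_get, if_pos (by omega)]
        rw [CT.sub_cons_of_get hp]
        rfl
    set e : sA.Node → tB.Node := fun x => ⟨x.1, eval x⟩ with he
    apply TSurv_embed_ex e
    · exact Subtype.ext rfl
    · intro x y hxy
      have h2 : (e x).1 = (e y).1 := by rw [hxy]
      exact Subtype.ext h2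
    · intro x
      have hcast : (e x).1 = x.1 := rfl
      rcases starT_node_addr x with h | ⟨i, hi, h⟩
      · rw [hcast, h, CT.blackAt_nil, CT.blackAt_nil]
        rw [show sA.isBlack = false from rfl, show tB.isBlack = false from rfl]
      · rw [hcast, h]
        rw [starT_blackAt_single (show i < 2*m + 1 by omega),
          starT_blackAt_single (show i < 2*m + 0 by omega)]
    · intro col x y
      have hcx : (e x).1 = x.1 := rfl
      have hcy : (e y).1 = y.1 := rfl
      rw [hcx, hcy]
      rcases starT_node_addr x with hx | ⟨i, hi, hx⟩
      · rw [hx]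
        rcases starT_node_addr y with hy | ⟨j, hj, hy⟩
        · rw [hy, starT_edge_nil, starT_edge_nil]
          simp
        · rw [hy, starT_edge_nil, starT_edge_nil]
          constructor
          · rintro ⟨rfl, j', hj', hjj⟩
            exact ⟨rfl, j', by omega, hjj⟩
          · rintro ⟨rfl, j', hj', hjj⟩
            have : j' = j := by
              have := (List.cons.injEq .. ▸ hjj).1
              omega
            exact ⟨rfl, j', by omega, hjj⟩
      · rw [hx]
        constructor
        · intro h; exact absurd h (starT_edge_single (by omega))
        · intro h; exact absurd h (starT_edge_single (by omega))
    · intro z hz; simp at hz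

end QSH

namespace QSH

local infixl:50 " <+ " => List.Sublist

/-! ### AUX: joins -/

lemma get?_lt {α : Type*} {l : List α} {i : ℕ} {a : α} (h : l[i]? = some a) :
    i < l.length := by
  by_contra hh
  rw [List.getElem?_eq_none (Nat.le_of_not_lt hh)] at h
  simp at h

lemma joinRoots_children (X Y : CT) :
    (X.joinRoots Y).children = X.children ++ Y.children := by
  cases X; cases Y; rfl

lemma joinRoots_isBlack (X Y : CT) : (X.joinRoots Y).isBlack = X.isBlack := by
  cases X; cases Y; rfl

lemma joinRoots_get_left (X Y : CT) {i : ℕ} {pr : Bool × CT}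
    (h : X.children[i]? = some pr) : (X.joinRoots Y).children[i]? = some pr := by
  rw [joinRoots_children, List.getElem?_append, if_pos (get?_lt h)]
  exact h

lemma joinRoots_get_right (X Y : CT) (i : ℕ) :
    (X.joinRoots Y).children[X.children.length + i]? = Y.children[i]? := by
  rw [joinRoots_children, List.getElem?_append, if_neg (by omega)]
  congr 1
  omega

/-- Address shift for the right half of a join. -/
def jshift (n : ℕ) : List ℕ → List ℕ
  | [] => []
  | i :: rest => (n + i) :: rest

lemma jshift_inj {n : ℕ} {x y : List ℕ} (h : jshift n x = jshift n y) : x = y := by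
  match x, y with
  | [], [] => rfl
  | [], j :: r => simp [jshift] at h
  | i :: r, [] => simp [jshift] at h
  | i :: r, j :: r' =>
    simp only [jshift, List.cons.injEq] at h
    obtain ⟨h1, h2⟩ := h
    rw [h2]
    have : i = j := by omega
    rw [this]

/-- Left-half node embedding into a join. -/
def jlN (X Y : CT) (x : X.Node) : (X.joinRoots Y).Node :=
  ⟨x.1, by
    rcases CT.node_dest X x with h | ⟨i, rest, pr, hx, hp, hsub⟩
    · rw [h]; rfl
    · rw [hx, CT.sub_cons_of_get (joinRoots_get_left X Y hp)]
      exact hsub⟩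

/-- Right-half node embedding into a join. -/
def jrN (X Y : CT) (y : Y.Node) : (X.joinRoots Y).Node :=
  ⟨jshift X.children.length y.1, by
    rcases CT.node_dest Y y with h | ⟨i, rest, pr, hy, hp, hsub⟩
    · rw [h]; rfl
    · rw [hy]
      show (CT.sub ((X.children.length + i) :: rest) (X.joinRoots Y)).isSome = true
      have hg : (X.joinRoots Y).children[X.children.length + i]? = some pr := by
        rw [joinRoots_get_right]; exact hp
      rw [CT.sub_cons_of_get hg]
      exact hsub⟩

@[simp] lemma jlN_addr (X Y : CT) (x : X.Node) : (jlN X Y x).1 = x.1 := rfl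
@[simp] lemma jrN_addr (X Y : CT) (y : Y.Node) :
    (jrN X Y y).1 = jshift X.children.length y.1 := rfl

lemma jlN_root (X Y : CT) : jlN X Y X.rootNode = (X.joinRoots Y).rootNode := rfl
lemma jrN_root (X Y : CT) : jrN X Y Y.rootNode = (X.joinRoots Y).rootNode := rfl

lemma addr_head_lt {X : CT} (x : X.Node) {i : ℕ} {rest : List ℕ} (h : x.1 = i :: rest) :
    i < X.children.length := by
  rcases CT.node_dest X x with h0 | ⟨j, r, pr, hx, hp, _⟩
  · rw [h0] at h; simp at h
  · rw [hx] at h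
    obtain ⟨rfl, rfl⟩ : j = i ∧ r = rest := by
      exact ⟨(List.cons.injEq .. ▸ h).1, (List.cons.injEq .. ▸ h).2⟩
    exact get?_lt hp

lemma jl_eq_jr_iff {X Y : CT} (x : X.Node) (y : Y.Node) :
    jlN X Y x = jrN X Y y ↔ (x.1 = [] ∧ y.1 = []) := by
  constructor
  · intro h
    have hv : x.1 = jshift X.children.length y.1 := congrArg Subtype.val h
    match hx : x.1, hy : y.1 with
    | [], [] => exact ⟨rfl, rfl⟩
    | [], j :: r => rw [hx, hy] at hv; simp [jshift] at hv
    | i :: r, [] => rw [hx, hy] at hv; simp [jshift] at hv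
    | i :: r, j :: r' =>
      rw [hx, hy] at hv
      have : i = X.children.length + j := (List.cons.injEq .. ▸ hv).1
      have := addr_head_lt x hx
      omega
  · rintro ⟨h1, h2⟩
    apply Subtype.ext
    rw [jlN_addr, jrN_addr, h1, h2]
    rfl

lemma jl_inj {X Y : CT} {x y : X.Node} : jlN X Y x = jlN X Y y ↔ x = y := by
  constructor
  · intro h
    have h2 : (jlN X Y x).1 = (jlN X Y y).1 := by rw [h]
    exact Subtype.ext h2
  · rintro rfl; rfl

lemma jr_inj {X Y : CT} {x y : Y.Node} : jrN X Y x = jrN X Y y ↔ x = y := by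
  constructor
  · intro h
    have h2 : (jrN X Y x).1 = (jrN X Y y).1 := by rw [h]
    exact Subtype.ext (jshift_inj h2)
  · rintro rfl; rfl

lemma blackAt_jl {X Y : CT} (x : X.Node) :
    (X.joinRoots Y).blackAt (jlN X Y x).1 ↔ X.blackAt x.1 := by
  rcases CT.node_dest X x with h | ⟨i, rest, pr, hx, hp, _⟩
  · rw [jlN_addr, h, CT.blackAt_nil, CT.blackAt_nil, joinRoots_isBlack]
  · rw [jlN_addr, hx, CT.blackAt_cons (joinRoots_get_left X Y hp), CT.blackAt_cons hp]

lemma blackAt_jr {X Y : CT} (Hb : X.isBlack = Y.isBlack) (y : Y.Node) :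
    (X.joinRoots Y).blackAt (jrN X Y y).1 ↔ Y.blackAt y.1 := by
  rcases CT.node_dest Y y with h | ⟨i, rest, pr, hy, hp, _⟩
  · rw [jrN_addr, h]
    show (X.joinRoots Y).blackAt [] ↔ Y.blackAt []
    rw [CT.blackAt_nil, CT.blackAt_nil, joinRoots_isBlack, Hb]
  · rw [jrN_addr, hy]
    show (X.joinRoots Y).blackAt ((X.children.length + i) :: rest) ↔ Y.blackAt (i :: rest)
    have hg : (X.joinRoots Y).children[X.children.length + i]? = some pr := by
      rw [joinRoots_get_right]; exact hp
    rw [CT.blackAt_cons hg, CT.blackAt_cons hp]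

lemma edge_nil_jl {X Y : CT} {col : Bool} (y : X.Node) :
    (X.joinRoots Y).edgeC col [] (jlN X Y y).1 ↔ X.edgeC col [] y.1 := by
  rw [jlN_addr, CT.edgeC_nil, CT.edgeC_nil]
  constructor
  · rintro ⟨i, pr, hp, hcol, hyi⟩
    have hy' : y.1 = i :: [] := hyi
    have hlt : i < X.children.length := addr_head_lt y hy'
    have hXp : X.children[i]? = some pr := by
      rw [joinRoots_children, List.getElem?_append, if_pos hlt] at hp
      exact hp
    exact ⟨i, pr, hXp, hcol, hyi⟩
  · rintro ⟨i, pr, hp, hcol, hyi⟩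
    exact ⟨i, pr, joinRoots_get_left X Y hp, hcol, hyi⟩

lemma edge_nil_jr {X Y : CT} {col : Bool} (y : Y.Node) :
    (X.joinRoots Y).edgeC col [] (jrN X Y y).1 ↔ Y.edgeC col [] y.1 := by
  rw [jrN_addr]
  match hy : y.1 with
  | [] =>
    show (X.joinRoots Y).edgeC col [] [] ↔ Y.edgeC col [] []
    constructor
    · intro h; exact absurd h (by rw [CT.edgeC_nil]; rintro ⟨i, pr, _, _, h⟩; simp at h)
    · intro h; exact absurd h (by rw [CT.edgeC_nil]; rintro ⟨i, pr, _, _, h⟩; simp at h)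
  | j :: rest =>
    show (X.joinRoots Y).edgeC col [] ((X.children.length + j) :: rest) ↔
      Y.edgeC col [] (j :: rest)
    rw [CT.edgeC_nil, CT.edgeC_nil]
    constructor
    · rintro ⟨i, pr, hp, hcol, hyi⟩
      simp only [List.cons.injEq] at hyi
      obtain ⟨hji, hrest⟩ := hyi
      subst hrest
      rw [← hji, joinRoots_get_right] at hp
      exact ⟨j, pr, hp, hcol, rfl⟩
    · rintro ⟨i, pr, hp, hcol, hyi⟩
      simp only [List.cons.injEq] at hyi
      obtain ⟨hji, hrest⟩ := hyi
      subst hrest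
      subst hji
      refine ⟨X.children.length + j, pr, ?_, hcol, rfl⟩
      rw [joinRoots_get_right]
      exact hp

lemma edge_jl_jl {X Y : CT} {col : Bool} (x y : X.Node) :
    (X.joinRoots Y).edgeC col (jlN X Y x).1 (jlN X Y y).1 ↔ X.edgeC col x.1 y.1 := by
  rcases CT.node_dest X x with h | ⟨i, rest, pr, hx, hp, _⟩
  · rw [jlN_addr, h]
    exact edge_nil_jl y
  · rw [jlN_addr, jlN_addr, hx,
      CT.edgeC_cons (joinRoots_get_left X Y hp), CT.edgeC_cons hp]

lemma edge_jr_jr {X Y : CT} {col : Bool} (x y : Y.Node) :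
    (X.joinRoots Y).edgeC col (jrN X Y x).1 (jrN X Y y).1 ↔ Y.edgeC col x.1 y.1 := by
  rcases CT.node_dest Y x with h | ⟨i, rest, pr, hx, hp, _⟩
  · rw [jrN_addr, h]
    show (X.joinRoots Y).edgeC col [] (jrN X Y y).1 ↔ Y.edgeC col [] y.1
    exact edge_nil_jr y
  · have hg : (X.joinRoots Y).children[X.children.length + i]? = some pr := by
      rw [joinRoots_get_right]; exact hp
    rw [jrN_addr, jrN_addr, hx]
    show (X.joinRoots Y).edgeC col ((X.children.length + i) :: rest)
        (jshift X.children.length y.1) ↔ Y.edgeC col (i :: rest) y.1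
    rw [CT.edgeC_cons hg, CT.edgeC_cons hp]
    constructor
    · rintro ⟨y', hy', he⟩
      match hyy : y.1 with
      | [] => rw [hyy] at hy'; simp [jshift] at hy'
      | j :: r =>
        rw [hyy] at hy'
        simp only [jshift, List.cons.injEq] at hy'
        obtain ⟨hji, hr⟩ := hy'
        have hji' : j = i := by omega
        refine ⟨y', ?_, he⟩
        rw [hji', hr]
    · rintro ⟨y', hy', he⟩
      refine ⟨y', ?_, he⟩
      rw [hy']
      rfl
  
lemma edge_jl_jr {X Y : CT} {col : Bool} (x : X.Node) (y : Y.Node) :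
    (X.joinRoots Y).edgeC col (jlN X Y x).1 (jrN X Y y).1 ↔
      (x.1 = [] ∧ Y.edgeC col [] y.1) := by
  rcases CT.node_dest X x with h | ⟨i, rest, pr, hx, hp, _⟩
  · rw [jlN_addr, h]
    simp only [true_and, h]
    show (X.joinRoots Y).edgeC col [] (jrN X Y y).1 ↔ Y.edgeC col [] y.1
    exact edge_nil_jr y
  · rw [jlN_addr, jrN_addr, hx]
    constructor
    · intro he
      rw [CT.edgeC_cons (joinRoots_get_left X Y hp)] at he
      obtain ⟨y', hy', -⟩ := he
      match hyy : y.1 with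
      | [] => rw [hyy] at hy'; simp [jshift] at hy'
      | j :: r =>
        rw [hyy] at hy'
        have h1 : X.children.length + j = i := (List.cons.injEq .. ▸ hy'.symm).1.symm
        have := addr_head_lt x hx
        omega
    · rintro ⟨h1, -⟩
      simp at h1

lemma edge_jr_jl {X Y : CT} {col : Bool} (y : Y.Node) (x : X.Node) :
    (X.joinRoots Y).edgeC col (jrN X Y y).1 (jlN X Y x).1 ↔
      (y.1 = [] ∧ X.edgeC col [] x.1) := by
  rcases CT.node_dest Y y with h | ⟨i, rest, pr, hy, hp, _⟩
  · rw [jrN_addr, h]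
    simp only [h, true_and]
    show (X.joinRoots Y).edgeC col [] (jlN X Y x).1 ↔ X.edgeC col [] x.1
    exact edge_nil_jl x
  · have hg : (X.joinRoots Y).children[X.children.length + i]? = some pr := by
      rw [joinRoots_get_right]; exact hp
    rw [jrN_addr, jlN_addr, hy]
    show (X.joinRoots Y).edgeC col ((X.children.length + i) :: rest) x.1 ↔ _
    constructor
    · intro he
      rw [CT.edgeC_cons hg] at he
      obtain ⟨y', hy', -⟩ := he
      match hxx : x.1 with
      | [] => rw [hxx] at hy'; simp at hy'
      | j :: r =>
        rw [hxx] at hy'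
        have h1 : j = X.children.length + i := (List.cons.injEq .. ▸ hy').1
        have := addr_head_lt x hxx
        omega
    · rintro ⟨h1, -⟩
      simp at h1

lemma join_node_cases {X Y : CT} (z : (X.joinRoots Y).Node) :
    (∃ x : X.Node, z = jlN X Y x) ∨ (∃ y : Y.Node, z = jrN X Y y) := by
  rcases CT.node_dest _ z with h | ⟨i, rest, pr, hz, hp, hsub⟩
  · left
    exact ⟨X.rootNode, Subtype.ext h⟩
  · by_cases hlt : i < X.children.length
    · left
      have hXp : X.children[i]? = some pr := by
        rw [joinRoots_children, List.getElem?_append, if_pos hlt] at hp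
        exact hp
      refine ⟨⟨i :: rest, ?_⟩, Subtype.ext (by rw [hz]; rfl)⟩
      rw [CT.sub_cons_of_get hXp]
      exact hsub
    · right
      have hi : i = X.children.length + (i - X.children.length) := by omega
      have hYp : Y.children[i - X.children.length]? = some pr := by
        rw [← joinRoots_get_right X Y (i - X.children.length), ← hi]
        exact hp
      refine ⟨⟨(i - X.children.length) :: rest, ?_⟩, Subtype.ext ?_⟩
      · rw [CT.sub_cons_of_get hYp]
        exact hsub
      · rw [hz]
        show i :: rest = jshift X.children.length ((i - X.children.length) :: rest)
        show i :: rest = (X.children.length + (i - X.children.length)) :: rest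
        rw [← hi]

end QSH

namespace QSH

local infixl:50 " <+ " => List.Sublist

/-! ### AUX: join composition of strategies -/

lemma addr_nil_iff {t : CT} (x : t.Node) : x.1 = [] ↔ x = t.rootNode :=
  ⟨fun h => Subtype.ext h, fun h => by rw [h]; rfl⟩

inductive JMerge (X X' Y Y' : CT) :
    List (X.Node × X'.Node) → List (Y.Node × Y'.Node) →
    List ((X.joinRoots Y).Node × (X'.joinRoots Y').Node) → Prop
  | nil : JMerge X X' Y Y' [] [] []
  | consL {hx hy h} (w : X.Node × X'.Node) : JMerge X X' Y Y' hx hy h →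
      JMerge X X' Y Y' (hx ++ [w]) hy (h ++ [(jlN X Y w.1, jlN X' Y' w.2)])
  | consR {hx hy h} (w : Y.Node × Y'.Node) : JMerge X X' Y Y' hx hy h →
      JMerge X X' Y Y' hx (hy ++ [w]) (h ++ [(jrN X Y w.1, jrN X' Y' w.2)])

lemma JMerge_mem {X X' Y Y' : CT} {hx hy h} (M : JMerge X X' Y Y' hx hy h) :
    ∀ z ∈ h, (∃ w ∈ hx, z = (jlN X Y w.1, jlN X' Y' w.2)) ∨
             (∃ w ∈ hy, z = (jrN X Y w.1, jrN X' Y' w.2)) := by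
  induction M with
  | nil => intro z hz; simp at hz
  | consL w _ ih =>
    intro z hz
    rcases List.mem_append.mp hz with hz | hz
    · rcases ih z hz with ⟨w', hw', hzw⟩ | ⟨w', hw', hzw⟩
      · exact Or.inl ⟨w', List.mem_append.mpr (Or.inl hw'), hzw⟩
      · exact Or.inr ⟨w', hw', hzw⟩
    · simp only [List.mem_singleton] at hz
      exact Or.inl ⟨w, List.mem_append.mpr (Or.inr (by simp)), hz⟩
  | consR w _ ih =>
    intro z hz
    rcases List.mem_append.mp hz with hz | hz
    · rcases ih z hz with ⟨w', hw', hzw⟩ | ⟨w', hw', hzw⟩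
      · exact Or.inl ⟨w', hw', hzw⟩
      · exact Or.inr ⟨w', List.mem_append.mpr (Or.inl hw'), hzw⟩
    · simp only [List.mem_singleton] at hz
      exact Or.inr ⟨w, List.mem_append.mpr (Or.inr (by simp)), hz⟩

lemma TOK_join {X X' Y Y' : CT} (Hb : X.isBlack = Y.isBlack) (Hb' : X'.isBlack = Y'.isBlack)
    {hx hy h} (M : JMerge X X' Y Y' hx hy h)
    (TX : TOK X X' hx) (TY : TOK Y Y' hy) :
    TOK (X.joinRoots Y) (X'.joinRoots Y') h := by
  have hclass : ∀ z ∈ ((X.joinRoots Y).rootNode, (X'.joinRoots Y').rootNode) :: h,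
      (∃ w ∈ (X.rootNode, X'.rootNode) :: hx, z = (jlN X Y w.1, jlN X' Y' w.2)) ∨
      (∃ w ∈ (Y.rootNode, Y'.rootNode) :: hy, z = (jrN X Y w.1, jrN X' Y' w.2)) := by
    intro z hz
    rcases List.mem_cons.mp hz with rfl | hz
    · exact Or.inl ⟨(X.rootNode, X'.rootNode), List.mem_cons_self, rfl⟩
    · rcases JMerge_mem M z hz with ⟨w, hw, hzw⟩ | ⟨w, hw, hzw⟩
      · exact Or.inl ⟨w, List.mem_cons_of_mem _ hw, hzw⟩
      · exact Or.inr ⟨w, List.mem_cons_of_mem _ hw, hzw⟩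
  intro x hx' y hy'
  rcases hclass x hx' with ⟨w, hw, rfl⟩ | ⟨w, hw, rfl⟩ <;>
    rcases hclass y hy' with ⟨v, hv, rfl⟩ | ⟨v, hv, rfl⟩
  · -- L L
    obtain ⟨heq, hbl, hed⟩ := TX w hw v hv
    refine ⟨?_, ?_, ?_⟩
    · rw [jl_inj, jl_inj]; exact heq
    · show (X.joinRoots Y).blackAt (jlN X Y w.1).1 ↔ (X'.joinRoots Y').blackAt (jlN X' Y' w.2).1
      rw [blackAt_jl, blackAt_jl]; exact hbl
    · intro col
      show (X.joinRoots Y).edgeC col (jlN X Y w.1).1 (jlN X Y v.1).1 ↔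
        (X'.joinRoots Y').edgeC col (jlN X' Y' w.2).1 (jlN X' Y' v.2).1
      rw [edge_jl_jl, edge_jl_jl]; exact hed col
  · -- L R
    obtain ⟨heqw, hblw, -⟩ := TX w hw (X.rootNode, X'.rootNode) (List.mem_cons_self)
    obtain ⟨heqv, hblv, hedv⟩ := TY (Y.rootNode, Y'.rootNode) (List.mem_cons_self) v hv
    have hnw : w.1.1 = [] ↔ w.2.1 = [] := by
      rw [addr_nil_iff, addr_nil_iff]; exact heqw
    have hnv : v.1.1 = [] ↔ v.2.1 = [] := by
      rw [addr_nil_iff, addr_nil_iff]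
      constructor
      · intro hh; exact ((TY v hv (Y.rootNode, Y'.rootNode) (List.mem_cons_self)).1).mp hh
      · intro hh; exact ((TY v hv (Y.rootNode, Y'.rootNode) (List.mem_cons_self)).1).mpr hh
    refine ⟨?_, ?_, ?_⟩
    · rw [jl_eq_jr_iff, jl_eq_jr_iff]
      constructor
      · rintro ⟨h1, h2⟩; exact ⟨hnw.mp h1, hnv.mp h2⟩
      · rintro ⟨h1, h2⟩; exact ⟨hnw.mpr h1, hnv.mpr h2⟩
    · show (X.joinRoots Y).blackAt (jlN X Y w.1).1 ↔ (X'.joinRoots Y').blackAt (jlN X' Y' w.2).1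
      rw [blackAt_jl, blackAt_jl]; exact hblw
    · intro col
      show (X.joinRoots Y).edgeC col (jlN X Y w.1).1 (jrN X Y v.1).1 ↔
        (X'.joinRoots Y').edgeC col (jlN X' Y' w.2).1 (jrN X' Y' v.2).1
      rw [edge_jl_jr, edge_jl_jr]
      have hYed : Y.edgeC col [] v.1.1 ↔ Y'.edgeC col [] v.2.1 := hedv col
      constructor
      · rintro ⟨h1, h2⟩; exact ⟨hnw.mp h1, hYed.mp h2⟩
      · rintro ⟨h1, h2⟩; exact ⟨hnw.mpr h1, hYed.mpr h2⟩
  · -- R L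
    obtain ⟨heqw, hblw, -⟩ := TY w hw (Y.rootNode, Y'.rootNode) (List.mem_cons_self)
    obtain ⟨-, -, hedv⟩ := TX (X.rootNode, X'.rootNode) (List.mem_cons_self) v hv
    obtain ⟨heqv, -, -⟩ := TX v hv (X.rootNode, X'.rootNode) (List.mem_cons_self)
    have hnw : w.1.1 = [] ↔ w.2.1 = [] := by
      rw [addr_nil_iff, addr_nil_iff]; exact heqw
    have hnv : v.1.1 = [] ↔ v.2.1 = [] := by
      rw [addr_nil_iff, addr_nil_iff]; exact heqv
    refine ⟨?_, ?_, ?_⟩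
    · constructor
      · intro hh
        have := (jl_eq_jr_iff v.1 w.1).mp hh.symm
        exact ((jl_eq_jr_iff v.2 w.2).mpr ⟨hnv.mp this.1, hnw.mp this.2⟩).symm
      · intro hh
        have := (jl_eq_jr_iff v.2 w.2).mp hh.symm
        exact ((jl_eq_jr_iff v.1 w.1).mpr ⟨hnv.mpr this.1, hnw.mpr this.2⟩).symm
    · show (X.joinRoots Y).blackAt (jrN X Y w.1).1 ↔ (X'.joinRoots Y').blackAt (jrN X' Y' w.2).1
      rw [blackAt_jr Hb, blackAt_jr Hb']; exact hblw
    · intro col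
      show (X.joinRoots Y).edgeC col (jrN X Y w.1).1 (jlN X Y v.1).1 ↔
        (X'.joinRoots Y').edgeC col (jrN X' Y' w.2).1 (jlN X' Y' v.2).1
      rw [edge_jr_jl, edge_jr_jl]
      have hXed : X.edgeC col [] v.1.1 ↔ X'.edgeC col [] v.2.1 := hedv col
      constructor
      · rintro ⟨h1, h2⟩; exact ⟨hnw.mp h1, hXed.mp h2⟩
      · rintro ⟨h1, h2⟩; exact ⟨hnw.mpr h1, hXed.mpr h2⟩
  · -- R R
    obtain ⟨heq, hbl, hed⟩ := TY w hw v hv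
    refine ⟨?_, ?_, ?_⟩
    · rw [jr_inj, jr_inj]; exact heq
    · show (X.joinRoots Y).blackAt (jrN X Y w.1).1 ↔ (X'.joinRoots Y').blackAt (jrN X' Y' w.2).1
      rw [blackAt_jr Hb, blackAt_jr Hb']; exact hbl
    · intro col
      show (X.joinRoots Y).edgeC col (jrN X Y w.1).1 (jrN X Y v.1).1 ↔
        (X'.joinRoots Y').edgeC col (jrN X' Y' w.2).1 (jrN X' Y' v.2).1
      rw [edge_jr_jr, edge_jr_jr]; exact hed col

lemma TSurv_join {X X' Y Y' : CT} (Hb : X.isBlack = Y.isBlack) (Hb' : X'.isBlack = Y'.isBlack) :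
    ∀ (k : ℕ) (P : List Quant), P ≠ [] →
    ∀ hx hy h, JMerge X X' Y Y' hx hy h →
    TOK X X' hx → TOK Y Y' hy →
    TSurv X X' P k hx → TSurv Y Y' P k hy →
    TSurv (X.joinRoots Y) (X'.joinRoots Y') P k h := by
  intro k
  induction k with
  | zero => intro _ _ _ _ _ _ _ _ _ _; trivial
  | succ k ih =>
    intro P hP hx hy h M TX TY SX SY
    constructor
    · intro hne a
      have hP' : pstep Quant.ex P ≠ [] := pstep_ne_nil hP hne
      rcases join_node_cases a with ⟨a0, rfl⟩ | ⟨a0, rfl⟩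
      · obtain ⟨b0, hok, hS'⟩ := SX.1 hne a0
        refine ⟨jlN X' Y' b0, ?_, ?_⟩
        · exact TOK_join Hb Hb' (JMerge.consL (a0, b0) M) hok TY
        · exact ih _ hP' _ _ _ (JMerge.consL (a0, b0) M) hok TY hS'
            (TSurv_mono Y Y' k (k+1) _ P _ (Nat.le_succ k) hP' (pstep_sublist _ _) SY)
      · obtain ⟨b0, hok, hS'⟩ := SY.1 hne a0
        refine ⟨jrN X' Y' b0, ?_, ?_⟩
        · exact TOK_join Hb Hb' (JMerge.consR (a0, b0) M) TX hok
        · exact ih _ hP' _ _ _ (JMerge.consR (a0, b0) M) TX hok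
            (TSurv_mono X X' k (k+1) _ P _ (Nat.le_succ k) hP' (pstep_sublist _ _) SX) hS'
    · intro hne b
      have hP' : pstep Quant.fa P ≠ [] := pstep_ne_nil hP hne
      rcases join_node_cases b with ⟨b0, rfl⟩ | ⟨b0, rfl⟩
      · obtain ⟨a0, hok, hS'⟩ := SX.2 hne b0
        refine ⟨jlN X Y a0, ?_, ?_⟩
        · exact TOK_join Hb Hb' (JMerge.consL (a0, b0) M) hok TY
        · exact ih _ hP' _ _ _ (JMerge.consL (a0, b0) M) hok TY hS'
            (TSurv_mono Y Y' k (k+1) _ P _ (Nat.le_succ k) hP' (pstep_sublist _ _) SY)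
      · obtain ⟨a0, hok, hS'⟩ := SY.2 hne b0
        refine ⟨jrN X Y a0, ?_, ?_⟩
        · exact TOK_join Hb Hb' (JMerge.consR (a0, b0) M) TX hok
        · exact ih _ hP' _ _ _ (JMerge.consR (a0, b0) M) TX hok
            (TSurv_mono X X' k (k+1) _ P _ (Nat.le_succ k) hP' (pstep_sublist _ _) SX) hS'

lemma TOK_nil_of_isBlack {s t : CT} (Hb : s.isBlack = t.isBlack) : TOK s t [] := by
  intro x hx y hy
  simp only [List.mem_singleton] at hx hy
  rw [hx, hy]
  refine ⟨by constructor <;> (intro; rfl), ?_, ?_⟩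
  · show s.blackAt [] ↔ t.blackAt []
    rw [CT.blackAt_nil, CT.blackAt_nil, Hb]
  · intro col
    show s.edgeC col [] [] ↔ t.edgeC col [] []
    constructor
    · intro h; exact absurd h (by rw [CT.edgeC_nil]; rintro ⟨i, pr, _, _, h⟩; simp at h)
    · intro h; exact absurd h (by rw [CT.edgeC_nil]; rintro ⟨i, pr, _, _, h⟩; simp at h)

end QSH

namespace QSH

local infixl:50 " <+ " => List.Sublist

/-! ### AUX: star composition -/

lemma CT.not_edgeC_nil_nil {t : CT} {col : Bool} : ¬ t.edgeC col [] [] := by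
  rw [CT.edgeC_nil]
  rintro ⟨i, pr, _, _, h⟩
  simp at h

lemma mem_of_get?_some {α : Type*} {l : List α} {i : ℕ} {a : α} (h : l[i]? = some a) :
    a ∈ l := by
  have hlt := get?_lt h
  have h2 : l[i] = a := by
    rw [List.getElem?_eq_getElem hlt] at h
    exact Option.some.inj h
  rw [← h2]
  exact List.getElem_mem hlt

lemma chN_inj {t : CT} {i : ℕ} {pr : Bool × CT} (hp : t.children[i]? = some pr)
    {x y : pr.2.Node} : t.chN hp x = t.chN hp y ↔ x = y := by
  constructor
  · intro h
    have h2 : (t.chN hp x).1 = (t.chN hp y).1 := by rw [h]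
    rw [CT.chN_addr, CT.chN_addr] at h2
    exact Subtype.ext (List.tail_eq_of_cons_eq h2)
  · rintro rfl; rfl

lemma chN_addr_ne_nil {t : CT} {i : ℕ} {pr : Bool × CT} (hp : t.children[i]? = some pr)
    (x : pr.2.Node) : (t.chN hp x).1 ≠ [] := by
  rw [CT.chN_addr]; simp

lemma edge_nil_chN {t : CT} {col : Bool} {i : ℕ} {pr : Bool × CT}
    (hp : t.children[i]? = some pr) (x : pr.2.Node) :
    t.edgeC col [] (t.chN hp x).1 ↔ (x.1 = [] ∧ pr.1 = col) := by
  rw [CT.chN_addr, CT.edgeC_nil]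
  constructor
  · rintro ⟨i', pr'', hp'', hcol, hii⟩
    simp only [List.cons.injEq] at hii
    obtain ⟨rfl, h2⟩ := hii
    rw [hp] at hp''
    refine ⟨h2, ?_⟩
    have hpe : pr = pr'' := Option.some.inj hp''
    rw [hpe]
    exact hcol
  · rintro ⟨h1, h2⟩
    exact ⟨i, pr, hp, h2, by rw [h1]⟩

lemma edge_chN_chN {t : CT} {col : Bool} {i : ℕ} {pr : Bool × CT}
    (hp : t.children[i]? = some pr) (x y : pr.2.Node) :
    t.edgeC col (t.chN hp x).1 (t.chN hp y).1 ↔ pr.2.edgeC col x.1 y.1 := by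
  rw [CT.chN_addr, CT.chN_addr, CT.edgeC_cons_cons hp]
  simp

lemma edge_chN_ne {t : CT} {col : Bool} {i i' : ℕ} {pr : Bool × CT}
    (hp : t.children[i]? = some pr) (hne : i ≠ i') (x : List ℕ) (y : List ℕ) :
    ¬ t.edgeC col (i :: x) (i' :: y) := by
  rw [CT.edgeC_cons hp]
  rintro ⟨y', hy', -⟩
  exact hne ((List.cons.injEq .. ▸ hy').1).symm

lemma edge_chN_to_nil {t : CT} {col : Bool} {i : ℕ} (x : List ℕ) :
    ¬ t.edgeC col (i :: x) [] := CT.not_edgeC_to_nil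

/-- A matched pair of components together with its local history. -/
structure PairDat (T T' : CT) : Type where
  i : ℕ
  j : ℕ
  pr : Bool × CT
  pr' : Bool × CT
  hp : T.children[i]? = some pr
  hp' : T'.children[j]? = some pr'
  hl : List (pr.2.Node × pr'.2.Node)

/-- Global atomic p.i. from the star decomposition. -/
lemma TOK_star {T T' : CT} (HbT : T.isBlack = T'.isBlack)
    (HcA : ∀ pr ∈ T.children, pr.1 = true) (HcB : ∀ pr ∈ T'.children, pr.1 = true)
    (μ : List (PairDat T T')) (h : List (T.Node × T'.Node))
    (inji : (μ.map PairDat.i).Nodup) (injj : (μ.map PairDat.j).Nodup)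
    (cls : ∀ z ∈ h, z = (T.rootNode, T'.rootNode) ∨
      ∃ d ∈ μ, ∃ w ∈ d.hl, z = (T.chN d.hp w.1, T'.chN d.hp' w.2))
    (ptok : ∀ d ∈ μ, TOK d.pr.2 d.pr'.2 d.hl) :
    TOK T T' h := by
  have cls' : ∀ z ∈ (T.rootNode, T'.rootNode) :: h, z = (T.rootNode, T'.rootNode) ∨
      ∃ d ∈ μ, ∃ w ∈ d.hl, z = (T.chN d.hp w.1, T'.chN d.hp' w.2) := by
    intro z hz
    rcases List.mem_cons.mp hz with rfl | hz
    · exact Or.inl rfl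
    · exact cls z hz
  intro x hx y hy
  rcases cls' x hx with rfl | ⟨d, hd, w, hw, rfl⟩
  · rcases cls' y hy with rfl | ⟨e, he, v, hv, rfl⟩
    · refine ⟨by constructor <;> (intro; rfl), ?_, ?_⟩
      · show T.blackAt [] ↔ T'.blackAt []
        rw [CT.blackAt_nil, CT.blackAt_nil, HbT]
      · intro col
        show T.edgeC col [] [] ↔ T'.edgeC col [] []
        exact ⟨fun hh => absurd hh CT.not_edgeC_nil_nil,
               fun hh => absurd hh CT.not_edgeC_nil_nil⟩
    · -- root vs component
      have hnv : v.1.1 = [] ↔ v.2.1 = [] := by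
        have := (ptok e he v (List.mem_cons_of_mem _ hv) (e.pr.2.rootNode, e.pr'.2.rootNode)
          (List.mem_cons_self)).1
        rw [addr_nil_iff, addr_nil_iff]
        exact this
      refine ⟨?_, ?_, ?_⟩
      · constructor
        · intro hh
          exact absurd (congrArg (fun z => z.1) hh.symm) (chN_addr_ne_nil e.hp v.1)
        · intro hh
          exact absurd (congrArg (fun z => z.1) hh.symm) (chN_addr_ne_nil e.hp' v.2)
      · show T.blackAt [] ↔ T'.blackAt []
        rw [CT.blackAt_nil, CT.blackAt_nil, HbT]
      · intro col
        show T.edgeC col [] (T.chN e.hp v.1).1 ↔ T'.edgeC col [] (T'.chN e.hp' v.2).1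
        rw [edge_nil_chN e.hp, edge_nil_chN e.hp']
        rw [HcA e.pr (mem_of_get?_some e.hp), HcB e.pr' (mem_of_get?_some e.hp')]
        constructor
        · rintro ⟨h1, h2⟩; exact ⟨hnv.mp h1, h2⟩
        · rintro ⟨h1, h2⟩; exact ⟨hnv.mpr h1, h2⟩
  · rcases cls' y hy with rfl | ⟨e, he, v, hv, rfl⟩
    · -- component vs root
      have hnw : w.1.1 = [] ↔ w.2.1 = [] := by
        have := (ptok d hd w (List.mem_cons_of_mem _ hw) (d.pr.2.rootNode, d.pr'.2.rootNode)
          (List.mem_cons_self)).1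
        rw [addr_nil_iff, addr_nil_iff]
        exact this
      refine ⟨?_, ?_, ?_⟩
      · constructor
        · intro hh
          exact absurd (congrArg (fun z => z.1) hh) (chN_addr_ne_nil d.hp w.1)
        · intro hh
          exact absurd (congrArg (fun z => z.1) hh) (chN_addr_ne_nil d.hp' w.2)
      · show T.blackAt (T.chN d.hp w.1).1 ↔ T'.blackAt (T'.chN d.hp' w.2).1
        rw [CT.chN_addr, CT.chN_addr, CT.blackAt_cons d.hp, CT.blackAt_cons d.hp']
        exact (ptok d hd w (List.mem_cons_of_mem _ hw) w (List.mem_cons_of_mem _ hw)).2.1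
      · intro col
        show T.edgeC col (T.chN d.hp w.1).1 [] ↔ T'.edgeC col (T'.chN d.hp' w.2).1 []
        rw [CT.chN_addr, CT.chN_addr]
        exact ⟨fun hh => absurd hh (edge_chN_to_nil _),
               fun hh => absurd hh (edge_chN_to_nil _)⟩
    · -- component vs component
      by_cases hde : d = e
      · subst hde
        obtain ⟨heq, hbl, hed⟩ := ptok d hd w (List.mem_cons_of_mem _ hw) v (List.mem_cons_of_mem _ hv)
        refine ⟨?_, ?_, ?_⟩
        · show T.chN d.hp w.1 = T.chN d.hp v.1 ↔ T'.chN d.hp' w.2 = T'.chN d.hp' v.2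
          rw [chN_inj d.hp, chN_inj d.hp']
          exact heq
        · show T.blackAt (T.chN d.hp w.1).1 ↔ T'.blackAt (T'.chN d.hp' w.2).1
          rw [CT.chN_addr, CT.chN_addr, CT.blackAt_cons d.hp, CT.blackAt_cons d.hp']
          exact hbl
        · intro col
          show T.edgeC col (T.chN d.hp w.1).1 (T.chN d.hp v.1).1 ↔
            T'.edgeC col (T'.chN d.hp' w.2).1 (T'.chN d.hp' v.2).1
          rw [edge_chN_chN d.hp, edge_chN_chN d.hp']
          exact hed col
      · have hii : d.i ≠ e.i := by
          intro hh
          exact hde (List.inj_on_of_nodup_map inji hd he hh)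
        have hjj : d.j ≠ e.j := by
          intro hh
          exact hde (List.inj_on_of_nodup_map injj hd he hh)
        refine ⟨?_, ?_, ?_⟩
        · constructor
          · intro hh
            have h2 : (T.chN d.hp w.1).1 = (T.chN e.hp v.1).1 := congrArg Subtype.val hh
            rw [CT.chN_addr, CT.chN_addr] at h2
            exact absurd ((List.cons.injEq .. ▸ h2).1) hii
          · intro hh
            have h2 : (T'.chN d.hp' w.2).1 = (T'.chN e.hp' v.2).1 := congrArg Subtype.val hh
            rw [CT.chN_addr, CT.chN_addr] at h2
            exact absurd ((List.cons.injEq .. ▸ h2).1) hjj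
        · show T.blackAt (T.chN d.hp w.1).1 ↔ T'.blackAt (T'.chN d.hp' w.2).1
          rw [CT.chN_addr, CT.chN_addr, CT.blackAt_cons d.hp, CT.blackAt_cons d.hp']
          exact (ptok d hd w (List.mem_cons_of_mem _ hw) w (List.mem_cons_of_mem _ hw)).2.1
        · intro col
          show T.edgeC col (T.chN d.hp w.1).1 (T.chN e.hp v.1).1 ↔
            T'.edgeC col (T'.chN d.hp' w.2).1 (T'.chN e.hp' v.2).1
          rw [CT.chN_addr, CT.chN_addr, CT.chN_addr, CT.chN_addr]
          exact ⟨fun hh => absurd hh (edge_chN_ne d.hp hii _ _),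
                 fun hh => absurd hh (edge_chN_ne d.hp' hjj _ _)⟩

end QSH

namespace QSH

local infixl:50 " <+ " => List.Sublist

lemma set_get_self {α : Type*} (l : List α) (n : ℕ) (hn : n < l.length) (v : α)
    (hv : l[n] = v) : l.set n v = l := by
  apply List.ext_getElem (by simp)
  intro m hm1 hm2
  rw [List.getElem_set]
  split
  · rename_i hh
    subst hh
    exact hv.symm
  · rfl

lemma mem_set_self' {α : Type*} (l : List α) (n : ℕ) (hn : n < l.length) (v : α) :
    v ∈ l.set n v := by
  rw [List.mem_iff_getElem]
  exact ⟨n, by rw [List.length_set]; exact hn, List.getElem_set_self _⟩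

lemma TSurv_star (T T' : CT) (p : List Quant) (m : ℕ)
    (HbT : T.isBlack = T'.isBlack)
    (HcA : ∀ pr ∈ T.children, pr.1 = true) (HcB : ∀ pr ∈ T'.children, pr.1 = true)
    (HA : ∀ (i : ℕ) (pr : Bool × CT), T.children[i]? = some pr →
      ∀ S : Finset ℕ, S.card < m → ∀ a : pr.2.Node,
      ∃ (j : ℕ) (pr' : Bool × CT) (_ : T'.children[j]? = some pr'), j ∉ S ∧
        ∃ b : pr'.2.Node, TOK pr.2 pr'.2 [(a, b)] ∧
          ∀ (P : List Quant) (k : ℕ), P ≠ [] → P <+ pstep Quant.ex p → k ≤ m →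
            TSurv pr.2 pr'.2 P k [(a, b)])
    (HB : ∀ (j : ℕ) (pr' : Bool × CT), T'.children[j]? = some pr' →
      ∀ S : Finset ℕ, S.card < m → ∀ b : pr'.2.Node,
      ∃ (i : ℕ) (pr : Bool × CT) (_ : T.children[i]? = some pr), i ∉ S ∧
        ∃ a : pr.2.Node, TOK pr.2 pr'.2 [(a, b)] ∧
          ∀ (P : List Quant) (k : ℕ), P ≠ [] → P <+ pstep Quant.fa p → k ≤ m →
            TSurv pr.2 pr'.2 P k [(a, b)]) :
    ∀ (k : ℕ) (P : List Quant) (μ : List (PairDat T T')) (h : List (T.Node × T'.Node)),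
    P ≠ [] → P <+ p → μ.length + k ≤ m →
    (μ.map PairDat.i).Nodup → (μ.map PairDat.j).Nodup →
    (∀ z ∈ h, z = (T.rootNode, T'.rootNode) ∨
      ∃ d ∈ μ, ∃ w ∈ d.hl, z = (T.chN d.hp w.1, T'.chN d.hp' w.2)) →
    (∀ d ∈ μ, TOK d.pr.2 d.pr'.2 d.hl) →
    (∀ d ∈ μ, TSurv d.pr.2 d.pr'.2 P k d.hl) →
    TSurv T T' P k h := by
  intro k
  induction k with
  | zero => intro _ _ _ _ _ _ _ _ _ _ _; trivial
  | succ k ih =>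
    intro P μ h hP hPp hcnt inji injj cls ptok pS
    have hkm : k ≤ m := by omega
    have hcard : ((μ.map PairDat.j).toFinset.card < m) ∧ ((μ.map PairDat.i).toFinset.card < m) := by
      have h1 : ∀ f : PairDat T T' → ℕ, (μ.map f).toFinset.card < m := by
        intro f
        have h2 : (μ.map f).toFinset.card ≤ (μ.map f).length := List.toFinset_card_le _
        rw [List.length_map] at h2
        omega
      exact ⟨h1 _, h1 _⟩
    constructor
    · -- spoiler picks a in T
      intro hne a
      have hP' : pstep Quant.ex P ≠ [] := pstep_ne_nil hP hne
      have hP'p : pstep Quant.ex P <+ p := (pstep_sublist _ _).trans hPp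
      rcases CT.node_dest T a with hnil | ⟨i, rest, pr, hx, hp₀, hsub⟩
      · -- root move
        obtain rfl : a = T.rootNode := CT.eq_root_of_addr_nil hnil
        refine ⟨T'.rootNode, ?_, ?_⟩
        · apply TOK_star HbT HcA HcB μ _ inji injj _ ptok
          intro z hz
          rcases List.mem_append.mp hz with hz | hz
          · exact cls z hz
          · simp only [List.mem_singleton] at hz
            exact Or.inl hz
        · apply ih _ μ _ hP' hP'p (by omega) inji injj _ ptok
          · intro d hd
            exact TSurv_mono _ _ k (k+1) _ P _ (Nat.le_succ k) hP' (pstep_sublist _ _) (pS d hd)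
          · intro z hz
            rcases List.mem_append.mp hz with hz | hz
            · exact cls z hz
            · simp only [List.mem_singleton] at hz
              exact Or.inl hz
      · -- component move
        by_cases hmatch : ∃ n, ∃ hn : n < μ.length, (μ[n]'hn).i = i
        · obtain ⟨n, hn, hni⟩ := hmatch
          set d := μ[n]'hn with hdd
          have hd_mem : d ∈ μ := List.getElem_mem hn
          have hdpr : d.pr = pr := by
            have h1 := d.hp
            rw [hni, hp₀] at h1
            exact (Option.some.inj h1).symm
          set a0 : d.pr.2.Node := ⟨rest, by rw [hdpr]; exact hsub⟩ with ha0def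
          have ha' : a = T.chN d.hp a0 := by
            apply Subtype.ext
            rw [CT.chN_addr, hx, hni]
          obtain ⟨b0, hokd, hSd⟩ := (pS d hd_mem).1 hne a0
          set dnew : PairDat T T' :=
            ⟨d.i, d.j, d.pr, d.pr', d.hp, d.hp', d.hl ++ [(a0, b0)]⟩ with hdnew
          set μ' := μ.set n dnew with hμ'
          have hmapi : μ'.map PairDat.i = (μ.map PairDat.i) := by
            rw [hμ', List.map_set]
            exact set_get_self _ n (by simpa using hn) _ (by simp [hdnew, hdd])
          have hmapj : μ'.map PairDat.j = (μ.map PairDat.j) := by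
            rw [hμ', List.map_set]
            exact set_get_self _ n (by simpa using hn) _ (by simp [hdnew, hdd])
          have hlen : μ'.length = μ.length := by rw [hμ', List.length_set]
          have hmem' : ∀ d' ∈ μ', d' ∈ μ ∨ d' = dnew := fun d' hd' =>
            List.mem_or_eq_of_mem_set hd'
          have hdnew_mem : dnew ∈ μ' := by
            rw [hμ']
            exact mem_set_self' μ n hn dnew
          have cls' : ∀ z ∈ h ++ [(a, T'.chN d.hp' b0)],
              z = (T.rootNode, T'.rootNode) ∨
              ∃ d' ∈ μ', ∃ w ∈ d'.hl, z = (T.chN d'.hp w.1, T'.chN d'.hp' w.2) := by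
            intro z hz
            rcases List.mem_append.mp hz with hz | hz
            · rcases cls z hz with hz | ⟨d0, hd0, w, hw, rfl⟩
              · exact Or.inl hz
              · right
                obtain ⟨n0, hn0, hdn0⟩ := List.mem_iff_getElem.mp hd0
                by_cases hnn : n0 = n
                · subst hnn
                  have hd0d : d0 = d := by rw [← hdn0, hdd]
                  subst hd0d
                  exact ⟨dnew, hdnew_mem, w, List.mem_append.mpr (Or.inl hw), rfl⟩
                · refine ⟨d0, ?_, w, hw, rfl⟩
                  rw [hμ']
                  have h2 : (μ.set n dnew)[n0]'(by rw [List.length_set]; exact hn0) = μ[n0]'hn0 :=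
                    List.getElem_set_ne (by omega) _
                  rw [← hdn0, ← h2]
                  exact List.getElem_mem _
            · simp only [List.mem_singleton] at hz
              right
              refine ⟨dnew, hdnew_mem, (a0, b0), by exact List.mem_append.mpr (Or.inr (List.mem_singleton_self _)), ?_⟩
              rw [hz, ha']
          have ptok' : ∀ d' ∈ μ', TOK d'.pr.2 d'.pr'.2 d'.hl := by
            intro d' hd'
            rcases hmem' d' hd' with hd' | rfl
            · exact ptok d' hd'
            · exact hokd
          refine ⟨T'.chN d.hp' b0, ?_, ?_⟩
          · exact TOK_star HbT HcA HcB μ' _ (by rw [hmapi]; exact inji)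
              (by rw [hmapj]; exact injj) cls' ptok'
          · apply ih _ μ' _ hP' hP'p (by rw [hlen]; omega) (by rw [hmapi]; exact inji)
              (by rw [hmapj]; exact injj) cls' ptok'
            intro d' hd'
            rcases hmem' d' hd' with hd' | rfl
            · exact TSurv_mono _ _ k (k+1) _ P _ (Nat.le_succ k) hP' (pstep_sublist _ _)
                (pS d' hd')
            · exact hSd
        · -- fresh component
          have hiS : i ∉ (μ.map PairDat.i) := by
            intro hi
            obtain ⟨d0, hd0, hd0i⟩ := List.mem_map.mp hi
            obtain ⟨n0, hn0, hdn0⟩ := List.mem_iff_getElem.mp hd0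
            exact hmatch ⟨n0, hn0, by rw [hdn0]; exact hd0i⟩
          set a0 : pr.2.Node := ⟨rest, hsub⟩ with ha0def
          obtain ⟨j, pr', hp', hjS, b0, hok1, hSall⟩ :=
            HA i pr hp₀ (μ.map PairDat.j).toFinset hcard.1 a0
          set dnew : PairDat T T' := ⟨i, j, pr, pr', hp₀, hp', [(a0, b0)]⟩ with hdnew
          set μ' := μ ++ [dnew] with hμ'
          have ha' : a = T.chN dnew.hp a0 := by
            apply Subtype.ext
            rw [CT.chN_addr, hx]
          have hmapi : μ'.map PairDat.i = μ.map PairDat.i ++ [i] := by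
            rw [hμ', List.map_append]; rfl
          have hmapj : μ'.map PairDat.j = μ.map PairDat.j ++ [j] := by
            rw [hμ', List.map_append]; rfl
          have inji' : (μ'.map PairDat.i).Nodup := by
            rw [hmapi]
            simp only [List.nodup_append, List.nodup_cons, List.not_mem_nil, List.nodup_nil]
            exact ⟨inji, by simp, by simpa using fun hh => hiS hh⟩
          have injj' : (μ'.map PairDat.j).Nodup := by
            rw [hmapj]
            simp only [List.nodup_append, List.nodup_cons, List.not_mem_nil, List.nodup_nil]
            refine ⟨injj, by simp, ?_⟩
            have : j ∉ (μ.map PairDat.j) := fun hh => hjS (List.mem_toFinset.mpr hh)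
            simpa using fun hh => this hh
          have hmem' : ∀ d' ∈ μ', d' ∈ μ ∨ d' = dnew := by
            intro d' hd'
            rcases List.mem_append.mp hd' with hd' | hd'
            · exact Or.inl hd'
            · simp only [List.mem_singleton] at hd'
              exact Or.inr hd'
          have hdnew_mem : dnew ∈ μ' := List.mem_append.mpr (Or.inr (by simp))
          have cls' : ∀ z ∈ h ++ [(a, T'.chN hp' b0)],
              z = (T.rootNode, T'.rootNode) ∨
              ∃ d' ∈ μ', ∃ w ∈ d'.hl, z = (T.chN d'.hp w.1, T'.chN d'.hp' w.2) := by
            intro z hz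
            rcases List.mem_append.mp hz with hz | hz
            · rcases cls z hz with hz | ⟨d0, hd0, w, hw, rfl⟩
              · exact Or.inl hz
              · exact Or.inr ⟨d0, List.mem_append.mpr (Or.inl hd0), w, hw, rfl⟩
            · simp only [List.mem_singleton] at hz
              right
              refine ⟨dnew, hdnew_mem, (a0, b0), by exact List.mem_singleton_self _, ?_⟩
              rw [hz, ha']
          have ptok' : ∀ d' ∈ μ', TOK d'.pr.2 d'.pr'.2 d'.hl := by
            intro d' hd'
            rcases hmem' d' hd' with hd' | rfl
            · exact ptok d' hd'
            · exact hok1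
          refine ⟨T'.chN hp' b0, ?_, ?_⟩
          · exact TOK_star HbT HcA HcB μ' _ inji' injj' cls' ptok'
          · apply ih _ μ' _ hP' hP'p (by rw [hμ']; simp; omega) inji' injj' cls' ptok'
            intro d' hd'
            rcases hmem' d' hd' with hd' | rfl
            · exact TSurv_mono _ _ k (k+1) _ P _ (Nat.le_succ k) hP' (pstep_sublist _ _)
                (pS d' hd')
            · exact hSall _ k hP' (pstep_mono hPp hne) hkm
    · -- spoiler picks b in T'
      intro hne b
      have hP' : pstep Quant.fa P ≠ [] := pstep_ne_nil hP hne
      have hP'p : pstep Quant.fa P <+ p := (pstep_sublist _ _).trans hPp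
      rcases CT.node_dest T' b with hnil | ⟨j, rest, pr', hx, hp₀', hsub⟩
      · obtain rfl : b = T'.rootNode := CT.eq_root_of_addr_nil hnil
        refine ⟨T.rootNode, ?_, ?_⟩
        · apply TOK_star HbT HcA HcB μ _ inji injj _ ptok
          intro z hz
          rcases List.mem_append.mp hz with hz | hz
          · exact cls z hz
          · simp only [List.mem_singleton] at hz
            exact Or.inl hz
        · apply ih _ μ _ hP' hP'p (by omega) inji injj _ ptok
          · intro d hd
            exact TSurv_mono _ _ k (k+1) _ P _ (Nat.le_succ k) hP' (pstep_sublist _ _) (pS d hd)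
          · intro z hz
            rcases List.mem_append.mp hz with hz | hz
            · exact cls z hz
            · simp only [List.mem_singleton] at hz
              exact Or.inl hz
      · by_cases hmatch : ∃ n, ∃ hn : n < μ.length, (μ[n]'hn).j = j
        · obtain ⟨n, hn, hnj⟩ := hmatch
          set d := μ[n]'hn with hdd
          have hd_mem : d ∈ μ := List.getElem_mem hn
          have hdpr : d.pr' = pr' := by
            have h1 := d.hp'
            rw [hnj, hp₀'] at h1
            exact (Option.some.inj h1).symm
          set b0 : d.pr'.2.Node := ⟨rest, by rw [hdpr]; exact hsub⟩ with hb0def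
          have hb' : b = T'.chN d.hp' b0 := by
            apply Subtype.ext
            rw [CT.chN_addr, hx, hnj]
          obtain ⟨a0, hokd, hSd⟩ := (pS d hd_mem).2 hne b0
          set dnew : PairDat T T' :=
            ⟨d.i, d.j, d.pr, d.pr', d.hp, d.hp', d.hl ++ [(a0, b0)]⟩ with hdnew
          set μ' := μ.set n dnew with hμ'
          have hmapi : μ'.map PairDat.i = (μ.map PairDat.i) := by
            rw [hμ', List.map_set]
            exact set_get_self _ n (by simpa using hn) _ (by simp [hdnew, hdd])
          have hmapj : μ'.map PairDat.j = (μ.map PairDat.j) := by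
            rw [hμ', List.map_set]
            exact set_get_self _ n (by simpa using hn) _ (by simp [hdnew, hdd])
          have hlen : μ'.length = μ.length := by rw [hμ', List.length_set]
          have hmem' : ∀ d' ∈ μ', d' ∈ μ ∨ d' = dnew := fun d' hd' =>
            List.mem_or_eq_of_mem_set hd'
          have hdnew_mem : dnew ∈ μ' := by
            rw [hμ']
            exact mem_set_self' μ n hn dnew
          have cls' : ∀ z ∈ h ++ [(T.chN d.hp a0, b)],
              z = (T.rootNode, T'.rootNode) ∨
              ∃ d' ∈ μ', ∃ w ∈ d'.hl, z = (T.chN d'.hp w.1, T'.chN d'.hp' w.2) := by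
            intro z hz
            rcases List.mem_append.mp hz with hz | hz
            · rcases cls z hz with hz | ⟨d0, hd0, w, hw, rfl⟩
              · exact Or.inl hz
              · right
                obtain ⟨n0, hn0, hdn0⟩ := List.mem_iff_getElem.mp hd0
                by_cases hnn : n0 = n
                · subst hnn
                  have hd0d : d0 = d := by rw [← hdn0, hdd]
                  subst hd0d
                  exact ⟨dnew, hdnew_mem, w, List.mem_append.mpr (Or.inl hw), rfl⟩
                · refine ⟨d0, ?_, w, hw, rfl⟩
                  rw [hμ']
                  have h2 : (μ.set n dnew)[n0]'(by rw [List.length_set]; exact hn0) = μ[n0]'hn0 :=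
                    List.getElem_set_ne (by omega) _
                  rw [← hdn0, ← h2]
                  exact List.getElem_mem _
            · simp only [List.mem_singleton] at hz
              right
              refine ⟨dnew, hdnew_mem, (a0, b0), by exact List.mem_append.mpr (Or.inr (List.mem_singleton_self _)), ?_⟩
              rw [hz, hb']
          have ptok' : ∀ d' ∈ μ', TOK d'.pr.2 d'.pr'.2 d'.hl := by
            intro d' hd'
            rcases hmem' d' hd' with hd' | rfl
            · exact ptok d' hd'
            · exact hokd
          refine ⟨T.chN d.hp a0, ?_, ?_⟩
          · exact TOK_star HbT HcA HcB μ' _ (by rw [hmapi]; exact inji)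
              (by rw [hmapj]; exact injj) cls' ptok'
          · apply ih _ μ' _ hP' hP'p (by rw [hlen]; omega) (by rw [hmapi]; exact inji)
              (by rw [hmapj]; exact injj) cls' ptok'
            intro d' hd'
            rcases hmem' d' hd' with hd' | rfl
            · exact TSurv_mono _ _ k (k+1) _ P _ (Nat.le_succ k) hP' (pstep_sublist _ _)
                (pS d' hd')
            · exact hSd
        · have hjS : j ∉ (μ.map PairDat.j) := by
            intro hj
            obtain ⟨d0, hd0, hd0j⟩ := List.mem_map.mp hj
            obtain ⟨n0, hn0, hdn0⟩ := List.mem_iff_getElem.mp hd0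
            exact hmatch ⟨n0, hn0, by rw [hdn0]; exact hd0j⟩
          set b0 : pr'.2.Node := ⟨rest, hsub⟩ with hb0def
          obtain ⟨i, pr, hp, hiS, a0, hok1, hSall⟩ :=
            HB j pr' hp₀' (μ.map PairDat.i).toFinset hcard.2 b0
          set dnew : PairDat T T' := ⟨i, j, pr, pr', hp, hp₀', [(a0, b0)]⟩ with hdnew
          set μ' := μ ++ [dnew] with hμ'
          have hb' : b = T'.chN dnew.hp' b0 := by
            apply Subtype.ext
            rw [CT.chN_addr, hx]
          have hmapi : μ'.map PairDat.i = μ.map PairDat.i ++ [i] := by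
            rw [hμ', List.map_append]; rfl
          have hmapj : μ'.map PairDat.j = μ.map PairDat.j ++ [j] := by
            rw [hμ', List.map_append]; rfl
          have inji' : (μ'.map PairDat.i).Nodup := by
            rw [hmapi]
            simp only [List.nodup_append, List.nodup_cons, List.not_mem_nil, List.nodup_nil]
            have : i ∉ (μ.map PairDat.i) := fun hh => hiS (List.mem_toFinset.mpr hh)
            exact ⟨inji, by simp, by simpa using fun hh => this hh⟩
          have injj' : (μ'.map PairDat.j).Nodup := by
            rw [hmapj]
            simp only [List.nodup_append, List.nodup_cons, List.not_mem_nil, List.nodup_nil]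
            exact ⟨injj, by simp, by simpa using fun hh => hjS hh⟩
          have hmem' : ∀ d' ∈ μ', d' ∈ μ ∨ d' = dnew := by
            intro d' hd'
            rcases List.mem_append.mp hd' with hd' | hd'
            · exact Or.inl hd'
            · simp only [List.mem_singleton] at hd'
              exact Or.inr hd'
          have hdnew_mem : dnew ∈ μ' := List.mem_append.mpr (Or.inr (by simp))
          have cls' : ∀ z ∈ h ++ [(T.chN hp a0, b)],
              z = (T.rootNode, T'.rootNode) ∨
              ∃ d' ∈ μ', ∃ w ∈ d'.hl, z = (T.chN d'.hp w.1, T'.chN d'.hp' w.2) := by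
            intro z hz
            rcases List.mem_append.mp hz with hz | hz
            · rcases cls z hz with hz | ⟨d0, hd0, w, hw, rfl⟩
              · exact Or.inl hz
              · exact Or.inr ⟨d0, List.mem_append.mpr (Or.inl hd0), w, hw, rfl⟩
            · simp only [List.mem_singleton] at hz
              right
              refine ⟨dnew, hdnew_mem, (a0, b0), by exact List.mem_singleton_self _, ?_⟩
              rw [hz, hb']
          have ptok' : ∀ d' ∈ μ', TOK d'.pr.2 d'.pr'.2 d'.hl := by
            intro d' hd'
            rcases hmem' d' hd' with hd' | rfl
            · exact ptok d' hd'
            · exact hok1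
          refine ⟨T.chN hp a0, ?_, ?_⟩
          · exact TOK_star HbT HcA HcB μ' _ inji' injj' cls' ptok'
          · apply ih _ μ' _ hP' hP'p (by rw [hμ']; simp; omega) inji' injj' cls' ptok'
            intro d' hd'
            rcases hmem' d' hd' with hd' | rfl
            · exact TSurv_mono _ _ k (k+1) _ P _ (Nat.le_succ k) hP' (pstep_sublist _ _)
                (pS d' hd')
            · exact hSall _ k hP' (pstep_mono hPp hne) hkm

end QSH

namespace QSH

local infixl:50 " <+ " => List.Sublist

/-! ### AUX: the main survival theorem -/

lemma exists_fresh (S : Finset ℕ) (c m : ℕ) (h : S.card < m) :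
    ∃ j, c ≤ j ∧ j < c + m ∧ j ∉ S := by
  by_contra h'
  push_neg at h'
  have hsub : Finset.Ico c (c + m) ⊆ S := by
    intro j hj
    rw [Finset.mem_Ico] at hj
    exact h' j hj.1 hj.2
  have h2 := Finset.card_le_card hsub
  rw [Nat.card_Ico] at h2
  omega

lemma rep2_get (Y Z : Bool × CT) (m i : ℕ) :
    (List.replicate m Y ++ List.replicate m Z)[i]? =
      if i < m then some Y else if i < 2*m then some Z else none := by
  rw [List.getElem?_append]
  simp only [List.length_replicate, List.getElem?_replicate]
  split_ifs <;> first | rfl | (exfalso; omega)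

lemma rep2_cons_get (x Y Z : Bool × CT) (m i : ℕ) :
    (x :: (List.replicate m Y ++ List.replicate m Z))[i]? =
      if i = 0 then some x
      else if i < m + 1 then some Y else if i < 2*m + 1 then some Z else none := by
  match i with
  | 0 => simp
  | i+1 =>
    rw [List.getElem?_cons_succ, rep2_get]
    rw [if_neg (show ¬ (i + 1 = 0) by omega)]
    by_cases h1 : i < m
    · rw [if_pos h1, if_pos (by omega)]
    · rw [if_neg h1, if_neg (show ¬ i + 1 < m + 1 by omega)]
      by_cases h2 : i < 2*m
      · rw [if_pos h2, if_pos (by omega)]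
      · rw [if_neg h2, if_neg (show ¬ i + 1 < 2*m + 1 by omega)]

/-- Special pair with differing left halves and identical right halves. -/
lemma pair_diffL {X X' Ys : CT} {q0 : List Quant} {m0 : ℕ}
    (HbX : X.isBlack = false) (HbX' : X'.isBlack = false) (HbY : Ys.isBlack = false)
    (HS : ∀ (P : List Quant) (k : ℕ), P ≠ [] → P <+ q0 → k ≤ m0 → TSurv X X' P k [])
    (y : Ys.Node) :
    TOK (X.joinRoots Ys) (X'.joinRoots Ys) [(jrN X Ys y, jrN X' Ys y)] ∧
    ∀ (P : List Quant) (k : ℕ), P ≠ [] → P <+ q0 → k ≤ m0 →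
      TSurv (X.joinRoots Ys) (X'.joinRoots Ys) P k [(jrN X Ys y, jrN X' Ys y)] := by
  have Hb : X.isBlack = Ys.isBlack := by rw [HbX, HbY]
  have Hb' : X'.isBlack = Ys.isBlack := by rw [HbX', HbY]
  have hdiag : ∀ z ∈ [((y : Ys.Node), y)], z.1 = z.2 := by
    intro z hz; simp only [List.mem_singleton] at hz; rw [hz]
  have M : JMerge X X' Ys Ys [] [((y : Ys.Node), y)]
      ([] ++ [(jrN X Ys y, jrN X' Ys y)]) := JMerge.consR (y, y) JMerge.nil
  have hTOKn : TOK X X' [] := TOK_nil_of_isBlack (by rw [HbX, HbX'])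
  constructor
  · exact TOK_join Hb Hb' M hTOKn (TOK_diag Ys _ hdiag)
  · intro P k hP hPq hkm
    exact TSurv_join Hb Hb' k P hP _ _ _ M hTOKn (TOK_diag Ys _ hdiag)
      (HS P k hP hPq hkm) (TSurv_refl Ys k P _ hdiag)

/-- Special pair with identical left halves and differing right halves. -/
lemma pair_diffR {Xc Y Y' : CT} {q0 : List Quant} {m0 : ℕ}
    (HbX : Xc.isBlack = false) (HbY : Y.isBlack = false) (HbY' : Y'.isBlack = false)
    (HS : ∀ (P : List Quant) (k : ℕ), P ≠ [] → P <+ q0 → k ≤ m0 → TSurv Y Y' P k [])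
    (x : Xc.Node) :
    TOK (Xc.joinRoots Y) (Xc.joinRoots Y') [(jlN Xc Y x, jlN Xc Y' x)] ∧
    ∀ (P : List Quant) (k : ℕ), P ≠ [] → P <+ q0 → k ≤ m0 →
      TSurv (Xc.joinRoots Y) (Xc.joinRoots Y') P k [(jlN Xc Y x, jlN Xc Y' x)] := by
  have Hb : Xc.isBlack = Y.isBlack := by rw [HbX, HbY]
  have Hb' : Xc.isBlack = Y'.isBlack := by rw [HbX, HbY']
  have hdiag : ∀ z ∈ [((x : Xc.Node), x)], z.1 = z.2 := by
    intro z hz; simp only [List.mem_singleton] at hz; rw [hz]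
  have M : JMerge Xc Xc Y Y' [((x : Xc.Node), x)] []
      ([] ++ [(jlN Xc Y x, jlN Xc Y' x)]) := JMerge.consL (x, x) JMerge.nil
  have hTOKn : TOK Y Y' [] := TOK_nil_of_isBlack (by rw [HbY, HbY'])
  constructor
  · exact TOK_join Hb Hb' M (TOK_diag Xc _ hdiag) hTOKn
  · intro P k hP hPq hkm
    exact TSurv_join Hb Hb' k P hP _ _ _ M (TOK_diag Xc _ hdiag) hTOKn
      (TSurv_refl Xc k P _ hdiag) (HS P k hP hPq hkm)

/-- An identical pair. -/
lemma pair_same {Z : CT} (a : Z.Node) :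
    TOK Z Z [(a, a)] ∧
    ∀ (P : List Quant) (k : ℕ), TSurv Z Z P k [(a, a)] := by
  have hdiag : ∀ z ∈ [((a : Z.Node), a)], z.1 = z.2 := by
    intro z hz; simp only [List.mem_singleton] at hz; rw [hz]
  exact ⟨TOK_diag Z _ hdiag, fun P k => TSurv_refl Z k P _ hdiag⟩

lemma ABt_isBlack (s : Quant) (q : List Quant) (m : ℕ) :
    (ABt s q m).1.isBlack = false ∧ (ABt s q m).2.isBlack = false := by
  cases s <;> cases q <;> exact ⟨rfl, rfl⟩

theorem TSurv_main (m : ℕ) : ∀ (q : List Quant) (s : Quant),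
    TSurv (Atil (s :: q) m) (Btil (s :: q) m) (s :: q) m [] := by
  intro q
  induction q with
  | nil => intro s; exact TSurv_base s m m
  | cons s' q'' ih =>
    intro s
    set X : CT := (ABt s' q'' m).1 with hX
    set B : CT := (ABt s' q'' m).2 with hB
    have hXb : X.isBlack = false := (ABt_isBlack s' q'' m).1
    have hBb : B.isBlack = false := (ABt_isBlack s' q'' m).2
    have hXsb : X.swap.isBlack = false := by rw [CT.isBlack_swap]; exact hXb
    have hBsb : B.swap.isBlack = false := by rw [CT.isBlack_swap]; exact hBb
    have IH : ∀ (P : List Quant) (k : ℕ), P ≠ [] → P <+ (s' :: q'') → k ≤ m →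
        TSurv X B P k [] := by
      intro P k h1 h2 h3
      exact TSurv_mono X B k m P (s' :: q'') [] h3 h1 h2 (ih s')
    have IHs : ∀ (P : List Quant) (k : ℕ), P ≠ [] → P <+ (s' :: q'') → k ≤ m →
        TSurv X.swap B.swap P k [] := by
      intro P k h1 h2 h3
      exact TSurv_mono X.swap B.swap k m P (s' :: q'') [] h3 h1 h2
        (TSurv_swap m (s' :: q'') [] (ih s'))
    cases s with
    | ex =>
      have hstep : pstep Quant.ex (Quant.ex :: s' :: q'') = s' :: q'' := pstep_cons_self _ _
      show TSurv (ABt Quant.ex (s' :: q'') m).1 (ABt Quant.ex (s' :: q'') m).2 _ m []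
      have hT1 : (ABt Quant.ex (s' :: q'') m).1 =
          CT.node false ((true, X.joinRoots X.swap) ::
            (List.replicate m (true, X.joinRoots B.swap) ++
             List.replicate m (true, B.joinRoots X.swap))) := by
        rw [ABt]
      have hT2 : (ABt Quant.ex (s' :: q'') m).2 =
          CT.node false (List.replicate m (true, X.joinRoots B.swap) ++
             List.replicate m (true, B.joinRoots X.swap)) := by
        rw [ABt]
      rw [hT1, hT2]
      apply TSurv_star
        (T := CT.node false ((true, X.joinRoots X.swap) ::
          (List.replicate m (true, X.joinRoots B.swap) ++
           List.replicate m (true, B.joinRoots X.swap))))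
        (T' := CT.node false (List.replicate m (true, X.joinRoots B.swap) ++
           List.replicate m (true, B.joinRoots X.swap)))
        (Quant.ex :: s' :: q'') m rfl
        (by
          intro pr hpr
          rcases List.mem_cons.mp hpr with rfl | hpr
          · rfl
          · rcases List.mem_append.mp hpr with hpr | hpr <;>
              rw [List.eq_of_mem_replicate hpr])
        (by
          intro pr hpr
          rcases List.mem_append.mp hpr with hpr | hpr <;>
            rw [List.eq_of_mem_replicate hpr])
        ?_ ?_ m (Quant.ex :: s' :: q'') [] [] (by simp) (List.Sublist.refl _) (by simp)
        (by simp) (by simp) (by simp) (by simp) (by simp)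
      · -- HA
        intro i pr hp S hS a
        have hp2 : ((true, X.joinRoots X.swap) ::
            (List.replicate m (true, X.joinRoots B.swap) ++
             List.replicate m (true, B.joinRoots X.swap)))[i]? = some pr := hp
        rw [rep2_cons_get] at hp2
        by_cases hi0 : i = 0
        · rw [if_pos hi0] at hp2
          obtain rfl : (true, X.joinRoots X.swap) = pr := Option.some.inj hp2
          rcases join_node_cases a with ⟨x, rfl⟩ | ⟨y, rfl⟩
          · -- left half: partner DAB
            obtain ⟨j, hj1, hj2, hjS⟩ := exists_fresh S 0 m hS
            refine ⟨j, (true, X.joinRoots B.swap), ?_, hjS, ?_⟩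
            · show (List.replicate m (true, X.joinRoots B.swap) ++
                List.replicate m (true, B.joinRoots X.swap))[j]? = _
              rw [rep2_get, if_pos (by omega)]
            · obtain ⟨htok, hsv⟩ := pair_diffR (Xc := X) (Y := X.swap) (Y' := B.swap)
                hXb hXsb hBsb IHs x
              refine ⟨jlN X B.swap x, htok, ?_⟩
              intro P k hP hPq hkm
              rw [hstep] at hPq
              exact hsv P k hP hPq hkm
          · -- right half: partner DBA
            obtain ⟨j, hj1, hj2, hjS⟩ := exists_fresh S m m hS
            refine ⟨j, (true, B.joinRoots X.swap), ?_, hjS, ?_⟩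
            · show (List.replicate m (true, X.joinRoots B.swap) ++
                List.replicate m (true, B.joinRoots X.swap))[j]? = _
              rw [rep2_get, if_neg (by omega), if_pos (by omega)]
            · obtain ⟨htok, hsv⟩ := pair_diffL (X := X) (X' := B) (Ys := X.swap)
                hXb hBb hXsb IH y
              refine ⟨jrN B X.swap y, htok, ?_⟩
              intro P k hP hPq hkm
              rw [hstep] at hPq
              exact hsv P k hP hPq hkm
        · rw [if_neg hi0] at hp2
          by_cases hi1 : i < m + 1
          · rw [if_pos hi1] at hp2
            obtain rfl : (true, X.joinRoots B.swap) = pr := Option.some.inj hp2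
            obtain ⟨j, hj1, hj2, hjS⟩ := exists_fresh S 0 m hS
            refine ⟨j, (true, X.joinRoots B.swap), ?_, hjS, ?_⟩
            · show (List.replicate m (true, X.joinRoots B.swap) ++
                List.replicate m (true, B.joinRoots X.swap))[j]? = _
              rw [rep2_get, if_pos (by omega)]
            · obtain ⟨htok, hsv⟩ := pair_same a
              exact ⟨a, htok, fun P k _ _ _ => hsv P k⟩
          · by_cases hi2 : i < 2*m + 1
            · rw [if_neg hi1, if_pos hi2] at hp2
              obtain rfl : (true, B.joinRoots X.swap) = pr := Option.some.inj hp2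
              obtain ⟨j, hj1, hj2, hjS⟩ := exists_fresh S m m hS
              refine ⟨j, (true, B.joinRoots X.swap), ?_, hjS, ?_⟩
              · show (List.replicate m (true, X.joinRoots B.swap) ++
                  List.replicate m (true, B.joinRoots X.swap))[j]? = _
                rw [rep2_get, if_neg (by omega), if_pos (by omega)]
              · obtain ⟨htok, hsv⟩ := pair_same a
                exact ⟨a, htok, fun P k _ _ _ => hsv P k⟩
            · rw [if_neg hi1, if_neg hi2] at hp2
              simp at hp2
      · -- HB
        intro j pr' hp' S hS b
        have hp2 : (List.replicate m (true, X.joinRoots B.swap) ++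
             List.replicate m (true, B.joinRoots X.swap))[j]? = some pr' := hp'
        rw [rep2_get] at hp2
        by_cases hj1 : j < m
        · rw [if_pos hj1] at hp2
          obtain rfl : (true, X.joinRoots B.swap) = pr' := Option.some.inj hp2
          obtain ⟨i, hi1, hi2, hiS⟩ := exists_fresh S 1 m hS
          refine ⟨i, (true, X.joinRoots B.swap), ?_, hiS, ?_⟩
          · show ((true, X.joinRoots X.swap) ::
              (List.replicate m (true, X.joinRoots B.swap) ++
               List.replicate m (true, B.joinRoots X.swap)))[i]? = _
            rw [rep2_cons_get, if_neg (by omega), if_pos (by omega)]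
          · obtain ⟨htok, hsv⟩ := pair_same b
            exact ⟨b, htok, fun P k _ _ _ => hsv P k⟩
        · by_cases hj2 : j < 2*m
          · rw [if_neg hj1, if_pos hj2] at hp2
            obtain rfl : (true, B.joinRoots X.swap) = pr' := Option.some.inj hp2
            obtain ⟨i, hi1, hi2, hiS⟩ := exists_fresh S (m+1) m hS
            refine ⟨i, (true, B.joinRoots X.swap), ?_, hiS, ?_⟩
            · show ((true, X.joinRoots X.swap) ::
                (List.replicate m (true, X.joinRoots B.swap) ++
                 List.replicate m (true, B.joinRoots X.swap)))[i]? = _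
              rw [rep2_cons_get, if_neg (by omega), if_neg (by omega), if_pos (by omega)]
            · obtain ⟨htok, hsv⟩ := pair_same b
              exact ⟨b, htok, fun P k _ _ _ => hsv P k⟩
          · rw [if_neg hj1, if_neg hj2] at hp2
            simp at hp2
    | fa =>
      have hstep : pstep Quant.fa (Quant.fa :: s' :: q'') = s' :: q'' := pstep_cons_self _ _
      show TSurv (ABt Quant.fa (s' :: q'') m).1 (ABt Quant.fa (s' :: q'') m).2 _ m []
      have hT1 : (ABt Quant.fa (s' :: q'') m).1 =
          CT.node false (List.replicate m (true, X.joinRoots B.swap) ++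
             List.replicate m (true, B.joinRoots X.swap)) := by
        rw [ABt]
      have hT2 : (ABt Quant.fa (s' :: q'') m).2 =
          CT.node false ((true, B.joinRoots B.swap) ::
            (List.replicate m (true, X.joinRoots B.swap) ++
             List.replicate m (true, B.joinRoots X.swap))) := by
        rw [ABt]
      rw [hT1, hT2]
      apply TSurv_star
        (T := CT.node false (List.replicate m (true, X.joinRoots B.swap) ++
           List.replicate m (true, B.joinRoots X.swap)))
        (T' := CT.node false ((true, B.joinRoots B.swap) ::
          (List.replicate m (true, X.joinRoots B.swap) ++
           List.replicate m (true, B.joinRoots X.swap))))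
        (Quant.fa :: s' :: q'') m rfl
        (by
          intro pr hpr
          rcases List.mem_append.mp hpr with hpr | hpr <;>
            rw [List.eq_of_mem_replicate hpr])
        (by
          intro pr hpr
          rcases List.mem_cons.mp hpr with rfl | hpr
          · rfl
          · rcases List.mem_append.mp hpr with hpr | hpr <;>
              rw [List.eq_of_mem_replicate hpr])
        ?_ ?_ m (Quant.fa :: s' :: q'') [] [] (by simp) (List.Sublist.refl _) (by simp)
        (by simp) (by simp) (by simp) (by simp) (by simp)
      · -- HA: all components of T have identical partners in T'
        intro i pr hp S hS a
        have hp2 : (List.replicate m (true, X.joinRoots B.swap) ++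
             List.replicate m (true, B.joinRoots X.swap))[i]? = some pr := hp
        rw [rep2_get] at hp2
        by_cases hi1 : i < m
        · rw [if_pos hi1] at hp2
          obtain rfl : (true, X.joinRoots B.swap) = pr := Option.some.inj hp2
          obtain ⟨j, hj1, hj2, hjS⟩ := exists_fresh S 1 m hS
          refine ⟨j, (true, X.joinRoots B.swap), ?_, hjS, ?_⟩
          · show ((true, B.joinRoots B.swap) ::
              (List.replicate m (true, X.joinRoots B.swap) ++
               List.replicate m (true, B.joinRoots X.swap)))[j]? = _
            rw [rep2_cons_get, if_neg (by omega), if_pos (by omega)]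
          · obtain ⟨htok, hsv⟩ := pair_same a
            exact ⟨a, htok, fun P k _ _ _ => hsv P k⟩
        · by_cases hi2 : i < 2*m
          · rw [if_neg hi1, if_pos hi2] at hp2
            obtain rfl : (true, B.joinRoots X.swap) = pr := Option.some.inj hp2
            obtain ⟨j, hj1, hj2, hjS⟩ := exists_fresh S (m+1) m hS
            refine ⟨j, (true, B.joinRoots X.swap), ?_, hjS, ?_⟩
            · show ((true, B.joinRoots B.swap) ::
                (List.replicate m (true, X.joinRoots B.swap) ++
                 List.replicate m (true, B.joinRoots X.swap)))[j]? = _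
              rw [rep2_cons_get, if_neg (by omega), if_neg (by omega), if_pos (by omega)]
            · obtain ⟨htok, hsv⟩ := pair_same a
              exact ⟨a, htok, fun P k _ _ _ => hsv P k⟩
          · rw [if_neg hi1, if_neg hi2] at hp2
            simp at hp2
      · -- HB
        intro j pr' hp' S hS b
        have hp2 : ((true, B.joinRoots B.swap) ::
            (List.replicate m (true, X.joinRoots B.swap) ++
             List.replicate m (true, B.joinRoots X.swap)))[j]? = some pr' := hp'
        rw [rep2_cons_get] at hp2
        by_cases hj0 : j = 0
        · rw [if_pos hj0] at hp2
          obtain rfl : (true, B.joinRoots B.swap) = pr' := Option.some.inj hp2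
          rcases join_node_cases b with ⟨y, rfl⟩ | ⟨y, rfl⟩
          · -- left half B: partner DBA
            obtain ⟨i, hi1, hi2, hiS⟩ := exists_fresh S m m hS
            refine ⟨i, (true, B.joinRoots X.swap), ?_, hiS, ?_⟩
            · show (List.replicate m (true, X.joinRoots B.swap) ++
                List.replicate m (true, B.joinRoots X.swap))[i]? = _
              rw [rep2_get, if_neg (by omega), if_pos (by omega)]
            · obtain ⟨htok, hsv⟩ := pair_diffR (Xc := B) (Y := X.swap) (Y' := B.swap)
                hBb hXsb hBsb IHs y
              refine ⟨jlN B X.swap y, htok, ?_⟩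
              intro P k hP hPq hkm
              rw [hstep] at hPq
              exact hsv P k hP hPq hkm
          · -- right half B.swap: partner DAB
            obtain ⟨i, hi1, hi2, hiS⟩ := exists_fresh S 0 m hS
            refine ⟨i, (true, X.joinRoots B.swap), ?_, hiS, ?_⟩
            · show (List.replicate m (true, X.joinRoots B.swap) ++
                List.replicate m (true, B.joinRoots X.swap))[i]? = _
              rw [rep2_get, if_pos (by omega)]
            · obtain ⟨htok, hsv⟩ := pair_diffL (X := X) (X' := B) (Ys := B.swap)
                hXb hBb hBsb IH y
              refine ⟨jrN X B.swap y, htok, ?_⟩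
              intro P k hP hPq hkm
              rw [hstep] at hPq
              exact hsv P k hP hPq hkm
        · rw [if_neg hj0] at hp2
          by_cases hj1 : j < m + 1
          · rw [if_pos hj1] at hp2
            obtain rfl : (true, X.joinRoots B.swap) = pr' := Option.some.inj hp2
            obtain ⟨i, hi1, hi2, hiS⟩ := exists_fresh S 0 m hS
            refine ⟨i, (true, X.joinRoots B.swap), ?_, hiS, ?_⟩
            · show (List.replicate m (true, X.joinRoots B.swap) ++
                List.replicate m (true, B.joinRoots X.swap))[i]? = _
              rw [rep2_get, if_pos (by omega)]
            · obtain ⟨htok, hsv⟩ := pair_same b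
              exact ⟨b, htok, fun P k _ _ _ => hsv P k⟩
          · by_cases hj2 : j < 2*m + 1
            · rw [if_neg hj1, if_pos hj2] at hp2
              obtain rfl : (true, B.joinRoots X.swap) = pr' := Option.some.inj hp2
              obtain ⟨i, hi1, hi2, hiS⟩ := exists_fresh S m m hS
              refine ⟨i, (true, B.joinRoots X.swap), ?_, hiS, ?_⟩
              · show (List.replicate m (true, X.joinRoots B.swap) ++
                  List.replicate m (true, B.joinRoots X.swap))[i]? = _
                rw [rep2_get, if_neg (by omega), if_pos (by omega)]
              · obtain ⟨htok, hsv⟩ := pair_same b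
                exact ⟨b, htok, fun P k _ _ _ => hsv P k⟩
            · rw [if_neg hj1, if_neg hj2] at hp2
              simp at hp2

end QSH

namespace QSH

open FirstOrder Language

local infixl:50 " <+ " => List.Sublist

/-! ### AUX: bridge to the game on the prefix forest -/

lemma Atil_isBlack (p : List Quant) (m : ℕ) : (Atil p m).isBlack = false := by
  cases p with
  | nil => rfl
  | cons s q => exact (ABt_isBlack s q m).1

lemma Btil_isBlack (p : List Quant) (m : ℕ) : (Btil p m).isBlack = false := by
  cases p with
  | nil => rfl
  | cons s q => exact (ABt_isBlack s q m).2

lemma TSurv_top (p : List Quant) (hp : p ≠ []) (m : ℕ) :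
    TSurv (Atil p m) (Btil p m) p m [] := by
  match p with
  | [] => exact absurd rfl hp
  | s :: q => exact TSurv_main m q s

lemma trie_node_facts {p : List Quant} {m : ℕ} (v : (trieGraph (fpm p m)).V) :
    ¬ p.Sublist v.1 ∧ v.1.length ≤ m := by
  obtain ⟨w, hne, q, hq, hpre⟩ := v
  obtain ⟨hnp, hlen⟩ := hq
  constructor
  · intro hsub
    exact hnp (hsub.trans hpre.sublist)
  · exact le_trans hpre.length_le hlen

lemma bridge1 (p : List Quant) (hp : p ≠ []) (m : ℕ) :
    ∀ (k : ℕ) (v : (trieGraph (fpm p m)).V)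
      (h : List ((Atil p m).Node × (Btil p m).Node)),
    h.length + 1 = v.1.length →
    TSurv (Atil p m) (Btil p m) (pres p v.1.dropLast) (m - v.1.dropLast.length) h →
    DWinN (trieGraph (fpm p m)) (Atil p m).Str (Btil p m).Str k v h := by
  intro k
  induction k with
  | zero => intro _ _ _ _; trivial
  | succ k ih =>
    intro v h hlen hS
    obtain ⟨hnp, hwm⟩ := trie_node_facts v
    have hwne : v.1 ≠ [] := v.2.1
    have hw1 : 1 ≤ v.1.length := by
      cases hv : v.1 with
      | nil => exact absurd hv hwne
      | cons a l => simp [hv]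
    set w := v.1 with hww
    set u := w.dropLast with huu
    set s := w.getLast hwne with hss
    have hwus : u ++ [s] = w := List.dropLast_append_getLast hwne
    have hP : pres p u ≠ [] := by
      intro hh
      rw [pres_eq_nil_iff] at hh
      have : u <+ w := by rw [← hwus]; exact List.sublist_append_left u [s]
      exact hnp (hh.trans this)
    have hPs : ∀ s0 : Quant, s = s0 → pres p u ≠ [s0] := by
      rintro s0 rfl hh
      have h2 : pres p w = [] := by
        rw [← hwus, pres_append, hh]
        simp [pstep]
      rw [pres_eq_nil_iff] at h2
      exact hnp h2
    have hbud : m - u.length = (m - w.length) + 1 := by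
      have : u.length = w.length - 1 := by
        rw [huu, List.length_dropLast]
      omega
    rw [hbud] at hS
    have hlab : (trieGraph (fpm p m)).lab v = s := rfl
    have hchild : ∀ (z : (Atil p m).Node × (Btil p m).Node),
        TSurv (Atil p m) (Btil p m) (pstep s (pres p u)) (m - w.length) (h ++ [z]) →
        ∀ w' : (trieGraph (fpm p m)).V, (trieGraph (fpm p m)).arc v w' →
        DWinN (trieGraph (fpm p m)) (Atil p m).Str (Btil p m).Str k w' (h ++ [z]) := by
      intro z hS' w' harc
      obtain ⟨s', hs'⟩ := harc
      apply ih
      · rw [hs']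
        simp only [List.length_append, List.length_singleton]
        rw [← hww]
        omega
      · have hdl : w'.1.dropLast = v.1 := by rw [hs']; exact List.dropLast_concat ..
        rw [hdl, ← hww, ← hwus, pres_append]
        have hlb : (u ++ [s]).length = w.length := by rw [hwus]
        rw [hlb]
        exact hS'
    cases hsv : s with
    | ex =>
      show (match (trieGraph (fpm p m)).lab v with
        | Quant.ex => ∀ a, ∃ b, HistOK (Atil p m).Str (Btil p m).Str (h ++ [(a, b)]) ∧
            ∀ w', (trieGraph (fpm p m)).arc v w' →
              DWinN (trieGraph (fpm p m)) (Atil p m).Str (Btil p m).Str k w' (h ++ [(a, b)])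
        | Quant.fa => ∀ b, ∃ a, HistOK (Atil p m).Str (Btil p m).Str (h ++ [(a, b)]) ∧
            ∀ w', (trieGraph (fpm p m)).arc v w' →
              DWinN (trieGraph (fpm p m)) (Atil p m).Str (Btil p m).Str k w' (h ++ [(a, b)]))
      rw [hlab, hsv]
      intro a
      obtain ⟨b, hok, hS'⟩ := hS.1 (hPs Quant.ex hsv) a
      refine ⟨b, TOK_histOK hok, ?_⟩
      exact hchild (a, b) (by rw [hsv]; exact hS')
    | fa =>
      show (match (trieGraph (fpm p m)).lab v with
        | Quant.ex => ∀ a, ∃ b, HistOK (Atil p m).Str (Btil p m).Str (h ++ [(a, b)]) ∧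
            ∀ w', (trieGraph (fpm p m)).arc v w' →
              DWinN (trieGraph (fpm p m)) (Atil p m).Str (Btil p m).Str k w' (h ++ [(a, b)])
        | Quant.fa => ∀ b, ∃ a, HistOK (Atil p m).Str (Btil p m).Str (h ++ [(a, b)]) ∧
            ∀ w', (trieGraph (fpm p m)).arc v w' →
              DWinN (trieGraph (fpm p m)) (Atil p m).Str (Btil p m).Str k w' (h ++ [(a, b)]))
      rw [hlab, hsv]
      intro b
      obtain ⟨a, hok, hS'⟩ := hS.2 (hPs Quant.fa hsv) b
      refine ⟨a, TOK_histOK hok, ?_⟩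
      exact hchild (a, b) (by rw [hsv]; exact hS')

theorem part1 (p : List Quant) (hp : p ≠ []) (m : ℕ) :
    DupWins (forestOf (fpm p m) (fpm_finite p m)) (Atil p m).Str (Btil p m).Str := by
  constructor
  · exact TOK_histOK (TOK_nil_of_isBlack (by rw [Atil_isBlack, Btil_isBlack]))
  · intro v hroot
    have hwne : v.1 ≠ [] := v.2.1
    have hdl : v.1.dropLast = [] := by
      by_contra hdl
      obtain ⟨w, hne, q, hq, hpre⟩ := v
      have hune : w.dropLast ≠ [] := hdl
      have hparent : ∃ q' ∈ fpm p m, w.dropLast <+: q' :=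
        ⟨q, hq, (List.dropLast_prefix w).trans hpre⟩
      exact hroot ⟨w.dropLast, hune, hparent⟩
        ⟨w.getLast hne, (List.dropLast_append_getLast hne).symm⟩
    have hlen1 : v.1.length = 1 := by
      have h2 : v.1.length - 1 = 0 := by
        rw [← List.length_dropLast, hdl]
        rfl
      cases hv : v.1 with
      | nil => exact absurd hv hwne
      | cons a l =>
        rw [hv] at h2
        simp at h2
        simp [hv, h2]
    apply bridge1 p hp m
    · simp [hlen1]
    · rw [hdl]
      show TSurv (Atil p m) (Btil p m) (pres p []) (m - 0) []
      rw [pres_nil, Nat.sub_zero]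
      exact TSurv_top p hp m

end QSH

namespace QSH

open FirstOrder Language

local infixl:50 " <+ " => List.Sublist

/-! ### AUX: words of quantifier structures -/

lemma qs_rank {L : FirstOrder.Language} : ∀ {n : ℕ} (ψ : NNF L n),
    ∃ d : ψ.qs.V → ℕ, ∀ v, ψ.qs.isRoot v ∨ ∃ u, ψ.qs.arc u v ∧ d u < d v := by
  intro n ψ
  induction ψ with
  | verum => exact ⟨fun x => x.elim, fun v => v.elim⟩
  | falsum => exact ⟨fun x => x.elim, fun v => v.elim⟩
  | eq t₁ t₂ => exact ⟨fun x => x.elim, fun v => v.elim⟩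
  | ne t₁ t₂ => exact ⟨fun x => x.elim, fun v => v.elim⟩
  | rel R ts => exact ⟨fun x => x.elim, fun v => v.elim⟩
  | nrel R ts => exact ⟨fun x => x.elim, fun v => v.elim⟩
  | conj φ ψ ihφ ihψ =>
    obtain ⟨d1, hd1⟩ := ihφ
    obtain ⟨d2, hd2⟩ := ihψ
    refine ⟨Sum.elim d1 d2, ?_⟩
    rintro (x | x)
    · rcases hd1 x with hr | ⟨u, hu, hlt⟩
      · left
        rintro (w | w) hw
        · cases hw with | inl h' => exact hr w h'
        · cases hw
      · exact Or.inr ⟨Sum.inl u, Sum.LiftRel.inl hu, hlt⟩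
    · rcases hd2 x with hr | ⟨u, hu, hlt⟩
      · left
        rintro (w | w) hw
        · cases hw
        · cases hw with | inr h' => exact hr w h'
      · exact Or.inr ⟨Sum.inr u, Sum.LiftRel.inr hu, hlt⟩
  | disj φ ψ ihφ ihψ =>
    obtain ⟨d1, hd1⟩ := ihφ
    obtain ⟨d2, hd2⟩ := ihψ
    refine ⟨Sum.elim d1 d2, ?_⟩
    rintro (x | x)
    · rcases hd1 x with hr | ⟨u, hu, hlt⟩
      · left
        rintro (w | w) hw
        · cases hw with | inl h' => exact hr w h'
        · cases hw
      · exact Or.inr ⟨Sum.inl u, Sum.LiftRel.inl hu, hlt⟩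
    · rcases hd2 x with hr | ⟨u, hu, hlt⟩
      · left
        rintro (w | w) hw
        · cases hw
        · cases hw with | inr h' => exact hr w h'
      · exact Or.inr ⟨Sum.inr u, Sum.LiftRel.inr hu, hlt⟩
  | ex φ ih =>
    obtain ⟨d, hd⟩ := ih
    refine ⟨fun v => v.elim 0 (fun x => d x + 1), ?_⟩
    rintro (_ | x)
    · left
      intro w hw
      cases w <;> exact hw
    · rcases hd x with hr | ⟨u, hu, hlt⟩
      · exact Or.inr ⟨none, hr, by simp⟩
      · exact Or.inr ⟨some u, hu, by simpa using hlt⟩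
  | fa φ ih =>
    obtain ⟨d, hd⟩ := ih
    refine ⟨fun v => v.elim 0 (fun x => d x + 1), ?_⟩
    rintro (_ | x)
    · left
      intro w hw
      cases w <;> exact hw
    · rcases hd x with hr | ⟨u, hu, hlt⟩
      · exact Or.inr ⟨none, hr, by simp⟩
      · exact Or.inr ⟨some u, hu, by simpa using hlt⟩

lemma ext_to_root {G : QGraph} (d : G.V → ℕ)
    (hd : ∀ v, G.isRoot v ∨ ∃ u, G.arc u v ∧ d u < d v) :
    ∀ (N : ℕ) (x : G.V) (l : List G.V), d x ≤ N →
    List.Chain' G.arc (x :: l) →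
    ∃ (r : G.V) (l₂ : List G.V), G.isRoot r ∧ List.Chain' G.arc (r :: l₂) ∧
      (x :: l) <+ (r :: l₂) := by
  intro N
  induction N with
  | zero =>
    intro x l hdx hch
    rcases hd x with hr | ⟨u, hu, hlt⟩
    · exact ⟨x, l, hr, hch, List.Sublist.refl _⟩
    · omega
  | succ N ihN =>
    intro x l hdx hch
    rcases hd x with hr | ⟨u, hu, hlt⟩
    · exact ⟨x, l, hr, hch, List.Sublist.refl _⟩
    · have hch2 : List.Chain' G.arc (u :: x :: l) := by
        rw [List.Chain', List.isChain_cons_cons]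
        exact ⟨hu, hch⟩
      obtain ⟨r, l₂, hr, hch3, hsub⟩ := ihN u (x :: l) (by omega) hch2
      exact ⟨r, l₂, hr, hch3, ((x :: l).sublist_cons_self u).trans hsub⟩

lemma words_addRoot {L : FirstOrder.Language} {n : ℕ} (ψ : NNF L (n+1)) (s : Quant)
    {u : List Quant} (hu : u ∈ ψ.qs.Words) :
    (s :: u) ∈ (ψ.qs.addRoot s).Words := by
  obtain ⟨l, hch, hsub⟩ := hu
  obtain ⟨d, hd⟩ := qs_rank ψ
  match l with
  | [] =>
    refine ⟨[none], ?_, ?_⟩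
    · exact List.isChain_singleton _
    · have : u = [] := List.sublist_nil.mp (by simpa using hsub)
      rw [this]
      show [s] <+ List.map (ψ.qs.addRoot s).lab [none]
      simp [QGraph.addRoot]
  | x :: l' =>
    obtain ⟨r, l₂, hr, hch2, hsub2⟩ := ext_to_root d hd (d x) x l' (le_refl _) hch
    refine ⟨(none : (ψ.qs.addRoot s).V) :: (r :: l₂).map (some : ψ.qs.V → (ψ.qs.addRoot s).V), ?_, ?_⟩
    · erw [List.Chain', List.isChain_cons]
      constructor
      · intro b hb
        erw [List.map_cons, List.head?_cons] at hb
        have hb' : b = some r := by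
          rw [Option.mem_def] at hb
          exact (Option.some.inj hb).symm
        rw [hb']
        exact hr
      · erw [List.isChain_map]
        exact hch2
    · show (s :: u) <+ List.map (ψ.qs.addRoot s).lab ((none : (ψ.qs.addRoot s).V) :: (r :: l₂).map (some : ψ.qs.V → (ψ.qs.addRoot s).V))
      erw [List.map_cons, List.map_map]
      have hlab : (ψ.qs.addRoot s).lab none = s := rfl
      rw [hlab]
      apply List.cons_sublist_cons.mpr
      have hcomp : ((ψ.qs.addRoot s).lab ∘ some) = ψ.qs.lab := rfl
      rw [hcomp]
      exact hsub.trans (hsub2.map ψ.qs.lab)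

lemma words_nil {G : QGraph} : ([] : List Quant) ∈ G.Words :=
  ⟨[], List.isChain_nil, List.nil_sublist _⟩

lemma words_union_l {G H : QGraph} {u : List Quant} (hu : u ∈ G.Words) :
    u ∈ (G.union H).Words := by
  obtain ⟨l, hch, hsub⟩ := hu
  refine ⟨l.map (Sum.inl : G.V → (G.union H).V), ?_, ?_⟩
  · erw [List.Chain', List.isChain_map]
    exact List.IsChain.imp (fun a b hab => Sum.LiftRel.inl hab) hch
  · show u <+ List.map (G.union H).lab (l.map (Sum.inl : G.V → (G.union H).V))
    erw [List.map_map]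
    have hcomp : ((G.union H).lab ∘ Sum.inl) = G.lab := rfl
    rw [hcomp]
    exact hsub

lemma words_union_r {G H : QGraph} {u : List Quant} (hu : u ∈ H.Words) :
    u ∈ (G.union H).Words := by
  obtain ⟨l, hch, hsub⟩ := hu
  refine ⟨l.map (Sum.inr : H.V → (G.union H).V), ?_, ?_⟩
  · erw [List.Chain', List.isChain_map]
    exact List.IsChain.imp (fun a b hab => Sum.LiftRel.inr hab) hch
  · show u <+ List.map (G.union H).lab (l.map (Sum.inr : H.V → (G.union H).V))
    erw [List.map_map]
    have hcomp : ((G.union H).lab ∘ Sum.inr) = H.lab := rfl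
    rw [hcomp]
    exact hsub

/-! ### AUX: part 2 -/

lemma snoc_fun_comp {α β : Type*} (g : α → β) (h : List α) (z : α) {n : ℕ}
    (hn : h.length = n) (hn' : (h ++ [z]).length = n + 1) :
    (fun i : Fin (n+1) => g ((h ++ [z]).get (Fin.cast hn'.symm i))) =
      Fin.snoc (fun i : Fin n => g (h.get (Fin.cast hn.symm i))) (g z) := by
  subst hn
  funext i
  refine Fin.lastCases ?_ ?_ i
  · rw [Fin.snoc_last]
    have hz : (h ++ [z]).get (Fin.cast hn'.symm (Fin.last h.length)) = z := by
      have h1 : ∀ hh : h.length < (h ++ [z]).length, (h ++ [z])[h.length]'hh = z := by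
        intro hh
        rw [List.getElem_concat_length]
        rfl
      exact h1 _
    rw [hz]
  · intro j
    rw [Fin.snoc_castSucc]
    have hj : (h ++ [z]).get (Fin.cast hn'.symm (Fin.castSucc j)) = h.get j :=
      List.getElem_append_left j.2
    rw [hj]
    first | rfl | skip

lemma part2gen (p : List Quant) (hp : p ≠ []) (m : ℕ) :
    ∀ {n : ℕ} (ψ : NNF tauPlus n) (w : List Quant)
      (h : List ((Atil p m).Node × (Btil p m).Node)) (hn : h.length = n),
    (∀ u ∈ ψ.qs.Words, ¬ p.Sublist (w ++ u) ∧ (w ++ u).length ≤ m) →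
    TOK (Atil p m) (Btil p m) h →
    TSurv (Atil p m) (Btil p m) (pres p w) (m - w.length) h →
    ψ.Realize (Atil p m).Str (fun i => (h.get (Fin.cast hn.symm i)).1) →
    ψ.Realize (Btil p m).Str (fun i => (h.get (Fin.cast hn.symm i)).2) := by
  intro n ψ
  induction ψ with
  | verum => intro _ _ _ _ _ _ _; trivial
  | falsum => intro _ _ _ _ _ _ hA; exact absurd hA (by simp [NNF.Realize])
  | @eq n t₁ t₂ =>
    intro w h hn hwords htok hsurv hA
    subst hn
    have hiso := TOK_histOK htok
    exact (hiso.1 t₁ t₂).mp hA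
  | @ne n t₁ t₂ =>
    intro w h hn hwords htok hsurv hA
    subst hn
    have hiso := TOK_histOK htok
    intro hcon
    exact hA ((hiso.1 t₁ t₂).mpr hcon)
  | @rel n k R ts =>
    intro w h hn hwords htok hsurv hA
    subst hn
    have hiso := TOK_histOK htok
    exact (hiso.2 k R ts).mp hA
  | @nrel n k R ts =>
    intro w h hn hwords htok hsurv hA
    subst hn
    have hiso := TOK_histOK htok
    intro hcon
    exact hA ((hiso.2 k R ts).mpr hcon)
  | conj φ ψ ihφ ihψ =>
    intro w h hn hwords htok hsurv hA
    exact ⟨ihφ w h hn (fun u hu => hwords u (words_union_l hu)) htok hsurv hA.1,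
           ihψ w h hn (fun u hu => hwords u (words_union_r hu)) htok hsurv hA.2⟩
  | disj φ ψ ihφ ihψ =>
    intro w h hn hwords htok hsurv hA
    rcases hA with hA | hA
    · exact Or.inl (ihφ w h hn (fun u hu => hwords u (words_union_l hu)) htok hsurv hA)
    · exact Or.inr (ihψ w h hn (fun u hu => hwords u (words_union_r hu)) htok hsurv hA)
  | @ex n θ ih =>
    intro w h hn hwords htok hsurv hA
    obtain ⟨hnp1, hlen1⟩ := hwords [Quant.ex] (words_addRoot θ Quant.ex words_nil)
    have hwlt : w.length < m := by
      have := hlen1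
      simp only [List.length_append, List.length_singleton] at this
      omega
    have hguard : pres p w ≠ [Quant.ex] := by
      intro hh
      apply hnp1
      rw [← pres_eq_nil_iff, pres_append, hh]
      simp [pstep]
    have hbud : m - w.length = (m - (w ++ [Quant.ex]).length) + 1 := by
      simp only [List.length_append, List.length_singleton]
      omega
    rw [hbud] at hsurv
    obtain ⟨x, hx⟩ := hA
    obtain ⟨b, htok', hsurv'⟩ := hsurv.1 hguard x
    have hn' : (h ++ [(x, b)]).length = n + 1 := by simp [hn]
    have hwords' : ∀ u ∈ θ.qs.Words,
        ¬ p.Sublist ((w ++ [Quant.ex]) ++ u) ∧ ((w ++ [Quant.ex]) ++ u).length ≤ m := by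
      intro u hu
      have := hwords (Quant.ex :: u) (words_addRoot θ Quant.ex hu)
      rw [← List.append_cons]
      exact this
    have hsurv'' : TSurv (Atil p m) (Btil p m) (pres p (w ++ [Quant.ex]))
        (m - (w ++ [Quant.ex]).length) (h ++ [(x, b)]) := by
      rw [pres_append]
      exact hsurv'
    have hres := ih (w ++ [Quant.ex]) (h ++ [(x, b)]) hn' hwords' htok' hsurv''
    rw [snoc_fun_comp Prod.fst h (x, b) hn hn',
        snoc_fun_comp Prod.snd h (x, b) hn hn'] at hres
    exact ⟨b, hres hx⟩
  | @fa n θ ih =>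
    intro w h hn hwords htok hsurv hA
    obtain ⟨hnp1, hlen1⟩ := hwords [Quant.fa] (words_addRoot θ Quant.fa words_nil)
    have hwlt : w.length < m := by
      have := hlen1
      simp only [List.length_append, List.length_singleton] at this
      omega
    have hguard : pres p w ≠ [Quant.fa] := by
      intro hh
      apply hnp1
      rw [← pres_eq_nil_iff, pres_append, hh]
      simp [pstep]
    have hbud : m - w.length = (m - (w ++ [Quant.fa]).length) + 1 := by
      simp only [List.length_append, List.length_singleton]
      omega
    rw [hbud] at hsurv
    intro y
    obtain ⟨a, htok', hsurv'⟩ := hsurv.2 hguard y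
    have hn' : (h ++ [(a, y)]).length = n + 1 := by simp [hn]
    have hwords' : ∀ u ∈ θ.qs.Words,
        ¬ p.Sublist ((w ++ [Quant.fa]) ++ u) ∧ ((w ++ [Quant.fa]) ++ u).length ≤ m := by
      intro u hu
      have := hwords (Quant.fa :: u) (words_addRoot θ Quant.fa hu)
      rw [← List.append_cons]
      exact this
    have hsurv'' : TSurv (Atil p m) (Btil p m) (pres p (w ++ [Quant.fa]))
        (m - (w ++ [Quant.fa]).length) (h ++ [(a, y)]) := by
      rw [pres_append]
      exact hsurv'
    have hres := ih (w ++ [Quant.fa]) (h ++ [(a, y)]) hn' hwords' htok' hsurv''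
    rw [snoc_fun_comp Prod.fst h (a, y) hn hn',
        snoc_fun_comp Prod.snd h (a, y) hn hn'] at hres
    exact hres (hA a)

theorem part2 (p : List Quant) (hp : p ≠ []) (m : ℕ) :
    ∀ ψ : NNF tauPlus 0, ψ.qs.Words ⊆ fpm p m →
      CTSat (Atil p m) ψ → CTSat (Btil p m) ψ := by
  intro ψ hsub hA
  have h0 : ([] : List ((Atil p m).Node × (Btil p m).Node)).length = 0 := rfl
  have hwords : ∀ u ∈ ψ.qs.Words, ¬ p.Sublist ([] ++ u) ∧ (([] : List Quant) ++ u).length ≤ m := by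
    intro u hu
    obtain ⟨h1, h2⟩ := hsub hu
    exact ⟨by simpa using h1, by simpa using h2⟩
  have hfun : ∀ (f g : Fin 0 → (Atil p m).Node), f = g := by
    intro f g; funext i; exact i.elim0
  have := part2gen p hp m ψ [] [] h0 hwords
    (TOK_nil_of_isBlack (by rw [Atil_isBlack, Btil_isBlack]))
    (by exact TSurv_top p hp m)
  have hA' : ψ.Realize (Atil p m).Str
      (fun i : Fin 0 => (([] : List ((Atil p m).Node × (Btil p m).Node)).get
        (Fin.cast h0.symm i)).1) := by
    have : (fun i : Fin 0 => (([] : List ((Atil p m).Node × (Btil p m).Node)).get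
        (Fin.cast h0.symm i)).1) = (fun i : Fin 0 => i.elim0) := by
      funext i; exact i.elim0
    rw [this]
    exact hA
  have hB := this hA'
  show ψ.Realize (Btil p m).Str (fun i : Fin 0 => i.elim0)
  have : (fun i : Fin 0 => i.elim0 : Fin 0 → (Btil p m).Node) =
      (fun i : Fin 0 => (([] : List ((Atil p m).Node × (Btil p m).Node)).get
        (Fin.cast h0.symm i)).2) := by
    funext i; exact i.elim0
  rw [this]
  exact hB

end QSH

namespace QSH

open FirstOrder Language

theorem duplicator_wins_fpm_game (p : List Quant) (hp : p ≠ []) (m : ℕ) (hm : 0 < m) :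
    DupWins (forestOf (fpm p m) (fpm_finite p m)) (Atil p m).Str (Btil p m).Str ∧
      ∀ ψ : NNF tauPlus 0, ψ.qs.Words ⊆ fpm p m →
        CTSat (Atil p m) ψ → CTSat (Btil p m) ψ :=
  ⟨part1 p hp m, part2 p hp m⟩

end QSH
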